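/- arXiv:1708.03890 — 8 statements merged into one kernel-verified Lean document; each statement's English description precedes it below -/
import Mathlib

section
/- For any simple graph G, the bivariate domination polynomial J(G;x,y) := Σ_{W ⊆ V(G)} x^{|W|} y^{|N(W)|} evaluated at x = -1/(1+t), y = 1/(1+t) and multiplied by (1+t)^{|V(G)|} equals the domination polynomial D(G,t) := Σ_{W ⊆ V(G), N[W]=V(G)} t^{|W|}. -/
open Finset
open scoped Classical

/-- External neighbourhood N(W) = N[W] \ W of a vertex subset. -/
noncomputable def extN {V : Type} [Fintype V] (G : SimpleGraph V) (W : Finset V) : Finset V :=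
  Finset.univ.filter (fun v => v ∉ W ∧ ∃ w ∈ W, G.Adj v w)

/-- The bivariate domination polynomial J(G;x,y) = ∑_{W ⊆ V} x^|W| y^|N(W)|. -/
noncomputable def JP {V : Type} [Fintype V] (G : SimpleGraph V) (x y : ℝ) : ℝ :=
  ∑ W : Finset V, x ^ W.card * y ^ (extN G W).card

/-- Vertex deletion G − a. -/
noncomputable def Gdel {V : Type} (G : SimpleGraph V) (a : V) : SimpleGraph {v : V // v ≠ a} :=
  G.induce {v : V | v ≠ a}

/-- Deletion of a set of vertices. -/
noncomputable def GdelSet {V : Type} (G : SimpleGraph V) (S : Set V) : SimpleGraph {v : V // v ∉ S} :=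
  G.induce {v : V | v ∉ S}

/-- Vertex contraction G∖a: join all neighbours of a, then delete a. -/
noncomputable def Gcon {V : Type} (G : SimpleGraph V) (a : V) : SimpleGraph {v : V // v ≠ a} where
  Adj u v := u ≠ v ∧ (G.Adj u.val v.val ∨ (G.Adj u.val a ∧ G.Adj a v.val))
  symm := ⟨fun _ _ ⟨h1, h2⟩ =>
    ⟨fun e => h1 e.symm, h2.imp G.adj_symm (fun ⟨p, q⟩ => ⟨G.adj_symm q, G.adj_symm p⟩)⟩⟩
  loopless := ⟨fun _ h => h.1 rfl⟩

/-- The domination polynomial D(G,t) = ∑_{W dominating} t^|W|. -/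
noncomputable def DP {V : Type} [Fintype V] (G : SimpleGraph V) (t : ℝ) : ℝ :=
  ∑ W ∈ Finset.univ.filter
      (fun W : Finset V => ∀ v : V, v ∈ W ∨ ∃ w ∈ W, G.Adj v w), t ^ W.card

section aux
variable {V : Type} [Fintype V] (G : SimpleGraph V)

lemma mem_closed_compl (W : Finset V) (v : V) :
    v ∈ (W ∪ extN G W)ᶜ ↔ ∀ w ∈ W, v ≠ w ∧ ¬ G.Adj v w := by
  simp only [mem_compl, mem_union, extN, mem_filter, mem_univ, true_and, not_or, not_and,
    not_exists]
  constructor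
  · rintro ⟨h1, h2⟩ w hw
    exact ⟨fun e => h1 (e ▸ hw), fun ha => h2 h1 w hw ha⟩
  · intro h
    have h1 : v ∉ W := fun hvW => (h v hvW).1 rfl
    exact ⟨h1, fun _ w hw => (h w hw).2⟩

lemma subset_symm (W S : Finset V) :
    S ⊆ (W ∪ extN G W)ᶜ ↔ W ⊆ (S ∪ extN G S)ᶜ := by
  constructor <;> intro h x hx <;> rw [mem_closed_compl] <;> intro w hw
  · have := (mem_closed_compl G W w).mp (h hw) x hx
    exact ⟨fun e => this.1 e.symm, fun ha => this.2 (ha.symm)⟩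
  · have := (mem_closed_compl G S w).mp (h hw) x hx
    exact ⟨fun e => this.1 e.symm, fun ha => this.2 (ha.symm)⟩

lemma powerset_sum_eq (A : Finset V) (f : Finset V → ℝ) :
    ∑ S ∈ A.powerset, f S = ∑ S : Finset V, if S ⊆ A then f S else 0 := by
  have h : A.powerset = Finset.univ.filter (fun S => S ⊆ A) := by
    ext S; simp [mem_powerset]
  rw [h, Finset.sum_filter]

lemma pow_card_eq_sum (A : Finset V) (t : ℝ) :
    (1 + t) ^ A.card = ∑ S ∈ A.powerset, t ^ S.card := by
  have := Finset.prod_add (fun _ : V => t) (fun _ : V => (1:ℝ)) A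
  simp only [prod_const, prod_const_one, mul_one] at this
  rw [add_comm 1 t, ← prod_const]
  simpa using this

lemma neg_one_sum (A : Finset V) :
    ∑ S ∈ A.powerset, (-1 : ℝ) ^ S.card = if A = ∅ then 1 else 0 := by
  have := Finset.sum_powerset_neg_one_pow_card (x := A)
  have := congrArg (fun z : ℤ => (z : ℝ)) this
  push_cast at this
  simpa using this

theorem J_at_special_point_eq_domination_polynomial
    {V : Type} [Fintype V] (G : SimpleGraph V) (t : ℝ) (ht : 1 + t ≠ 0) :
    (1 + t) ^ (Fintype.card V) * JP G (-1 / (1 + t)) (1 / (1 + t)) = DP G t := by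
  classical
  have hdisj : ∀ W : Finset V, Disjoint W (extN G W) := by
    intro W
    simp only [Finset.disjoint_left, extN, mem_filter]
    tauto
  -- step 1: rewrite summand
  have step1 : (1 + t) ^ (Fintype.card V) * JP G (-1 / (1 + t)) (1 / (1 + t))
      = ∑ W : Finset V, (-1:ℝ) ^ W.card * (1 + t) ^ (((W ∪ extN G W)ᶜ).card) := by
    rw [JP, Finset.mul_sum]
    refine Finset.sum_congr rfl fun W _ => ?_
    have hcard : (W ∪ extN G W).card = W.card + (extN G W).card :=
      Finset.card_union_of_disjoint (hdisj W)
    have hle : (W ∪ extN G W).card ≤ Fintype.card V := by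
      simpa using Finset.card_le_card (Finset.subset_univ (W ∪ extN G W))
    have hcompl : ((W ∪ extN G W)ᶜ).card = Fintype.card V - (W.card + (extN G W).card) := by
      rw [Finset.card_compl, hcard]
    rw [hcard] at hle
    have hpow : ((1+t):ℝ) ^ (Fintype.card V)
        = (1+t) ^ (Fintype.card V - (W.card + (extN G W).card))
          * (1+t) ^ W.card * (1+t) ^ (extN G W).card := by
      rw [mul_assoc, ← pow_add, ← pow_add]; congr 1; omega
    rw [hcompl, hpow, div_pow, div_pow, one_pow]
    field_simp
  rw [step1]
  -- step 2: expand (1+t)^|complement| as sum over subsets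
  have step2 : ∀ W : Finset V,
      (-1:ℝ) ^ W.card * (1 + t) ^ (((W ∪ extN G W)ᶜ).card)
        = ∑ S : Finset V, (if S ⊆ (W ∪ extN G W)ᶜ then (-1:ℝ) ^ W.card * t ^ S.card else 0) := by
    intro W
    rw [pow_card_eq_sum, powerset_sum_eq, Finset.mul_sum]
    exact Finset.sum_congr rfl fun S _ => by split <;> simp
  simp only [step2]
  rw [Finset.sum_comm]
  -- step 3: inner sum over W
  have step3 : ∀ S : Finset V,
      (∑ W : Finset V, if S ⊆ (W ∪ extN G W)ᶜ then (-1:ℝ) ^ W.card * t ^ S.card else 0)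
        = t ^ S.card * (if (S ∪ extN G S)ᶜ = ∅ then 1 else 0) := by
    intro S
    have : ∀ W : Finset V,
        (if S ⊆ (W ∪ extN G W)ᶜ then (-1:ℝ) ^ W.card * t ^ S.card else 0)
          = (if W ⊆ (S ∪ extN G S)ᶜ then (-1:ℝ) ^ W.card * t ^ S.card else 0) := by
      intro W; exact if_congr (subset_symm G W S) rfl rfl
    simp only [this]
    rw [← powerset_sum_eq, ← Finset.sum_mul, neg_one_sum, mul_comm]
  simp only [step3]
  rw [DP, Finset.sum_filter]
  refine Finset.sum_congr rfl fun S _ => ?_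
  have hiff : ((S ∪ extN G S)ᶜ = ∅) ↔ (∀ v : V, v ∈ S ∨ ∃ w ∈ S, G.Adj v w) := by
    rw [Finset.compl_eq_empty_iff, Finset.eq_univ_iff_forall]
    refine forall_congr' fun v => ?_
    simp only [mem_union, extN, mem_filter, mem_univ, true_and]
    tauto
  rw [if_congr hiff rfl rfl]
  split <;> simp
end aux
end

section
/- Let a be a vertex of a graph G. The sum of x^{|W|} y^{|N(W)|} over all subsets W ⊆ V(G) with a ∈ W and N(a) ∩ W = ∅ equals x · y^{|N(a)|} · J(G − N[a]; x, y). -/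
open Finset
open scoped Classical

theorem J_cond_mem_no_neighbor {V : Type} [Fintype V] (G : SimpleGraph V) (a : V) (x y : ℝ) :
    ∑ W ∈ Finset.univ.filter
        (fun W : Finset V => a ∈ W ∧ ∀ w ∈ W, ¬ G.Adj a w),
      x ^ W.card * y ^ (extN G W).card
      = x * y ^ (Finset.univ.filter (fun v => G.Adj a v)).card *
          JP (GdelSet G {v : V | v = a ∨ G.Adj a v}) x y := by
  classical
  set S : Set V := {v : V | v = a ∨ G.Adj a v} with hS
  have hnS : ∀ v : V, v ∉ S ↔ (v ≠ a ∧ ¬ G.Adj a v) := by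
    intro v; simp [hS, not_or]
  rw [JP, Finset.mul_sum]
  refine Finset.sum_bij' (fun W _ => W.subtype (fun v => v ∉ S))
    (fun (W' : Finset {v : V | v ∉ S}) _ =>
      insert a (W'.map (Function.Embedding.subtype _)))
    (fun _ _ => Finset.mem_univ _) ?_ ?_ ?_ ?_
  · -- hj : insert a (map W') ∈ filter
    intro W' _
    simp only [Finset.mem_filter, Finset.mem_univ, true_and]
    constructor
    · exact Finset.mem_insert_self a _
    · intro w hw
      rcases Finset.mem_insert.mp hw with rfl | hw
      · exact G.loopless.irrefl _
      · rcases Finset.mem_map.mp hw with ⟨w', _, rfl⟩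
        exact ((hnS _).mp w'.2).2
  · -- left_inv
    intro W hW
    simp only [Finset.mem_filter, Finset.mem_univ, true_and] at hW
    obtain ⟨ha, hnb⟩ := hW
    ext v
    simp only [Finset.mem_insert, Finset.mem_map, Finset.mem_subtype,
      Function.Embedding.coe_subtype]
    constructor
    · rintro (rfl | ⟨v', hv', rfl⟩)
      · exact ha
      · exact hv'
    · intro hv
      by_cases hva : v = a
      · exact Or.inl hva
      · right
        have hvS : v ∉ S := (hnS v).mpr ⟨hva, hnb v hv⟩
        exact ⟨⟨v, hvS⟩, hv, rfl⟩
  · -- right_inv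
    intro W' _
    ext v'
    simp only [Finset.mem_subtype, Finset.mem_insert, Finset.mem_map,
      Function.Embedding.coe_subtype]
    constructor
    · rintro (hva | ⟨w', hw', hww⟩)
      · exact absurd (Or.inl hva) v'.2
      · rwa [Subtype.ext hww.symm]
    · intro hv'
      exact Or.inr ⟨v', hv', rfl⟩
  · -- values
    intro W hW
    simp only [Finset.mem_filter, Finset.mem_univ, true_and] at hW
    obtain ⟨ha, hnb⟩ := hW
    have hcard : W.card = (W.subtype (fun v => v ∉ S)).card + 1 := by
      rw [Finset.card_subtype]
      have hfe : W.filter (fun v => v ∉ S) = W.erase a := by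
        ext v
        simp only [Finset.mem_filter, Finset.mem_erase]
        constructor
        · rintro ⟨hv, hvS⟩; exact ⟨((hnS v).mp hvS).1, hv⟩
        · rintro ⟨hva, hv⟩; exact ⟨hv, (hnS v).mpr ⟨hva, hnb v hv⟩⟩
      rw [hfe, Finset.card_erase_of_mem ha]
      have := Finset.card_pos.mpr ⟨a, ha⟩
      omega
    have hext : extN G W =
        (Finset.univ.filter (fun v => G.Adj a v)) ∪
          (extN (GdelSet G S) (W.subtype (fun v => v ∉ S))).map
            (Function.Embedding.subtype _) := by
      ext v
      simp only [extN, GdelSet, Finset.mem_filter, Finset.mem_univ, true_and,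
        Finset.mem_union, Finset.mem_map, Finset.mem_subtype,
        Function.Embedding.coe_subtype, SimpleGraph.comap_adj]
      constructor
      · rintro ⟨hvW, w, hw, hvw⟩
        by_cases hav : G.Adj a v
        · exact Or.inl hav
        · right
          have hva : v ≠ a := by rintro rfl; exact hvW ha
          have hvS : v ∉ S := (hnS v).mpr ⟨hva, hav⟩
          have hwa : w ≠ a := by
            rintro rfl; exact hav hvw.symm
          have hwS : w ∉ S := (hnS w).mpr ⟨hwa, hnb w hw⟩
          refine ⟨⟨v, hvS⟩, ⟨?_, ⟨⟨w, hwS⟩, hw, hvw⟩⟩, rfl⟩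
          intro hmem
          exact hvW hmem
      · rintro (hav | ⟨v', ⟨hv'W, w', hw', hvw⟩, rfl⟩)
        · refine ⟨fun hv => hnb v hv hav, a, ha, hav.symm⟩
        · refine ⟨?_, w'.1, hw', hvw⟩
          intro hv
          exact hv'W hv
    have hdisj : Disjoint (Finset.univ.filter (fun v => G.Adj a v))
        ((extN (GdelSet G S) (W.subtype (fun v => v ∉ S))).map
          (Function.Embedding.subtype _)) := by
      rw [Finset.disjoint_left]
      intro v hv hv'
      rcases Finset.mem_map.mp hv' with ⟨v'', _, rfl⟩
      exact ((hnS _).mp v''.2).2 (Finset.mem_filter.mp hv).2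
    rw [hext, Finset.card_union_of_disjoint hdisj, Finset.card_map, hcard]
    ring
end

section
/- Let a be a vertex of a graph G. Then Σ_{W : a ∈ W, N(a) ∩ W ≠ ∅} x^{|W|} y^{|N_G(W)|} = x · ( J(G∖a; x, y) − Σ_{W : N[a] ∩ W = ∅} x^{|W|} y^{|N_G(W)|} ), where G∖a is the vertex contraction of a (add edges between all pairs of vertices in N(a), then delete a). -/
open Finset
open scoped Classical

section Aux

set_option linter.unusedSectionVars false

variable {V : Type} [Fintype V] (G : SimpleGraph V) (a : V)

private lemma mem_extN {W : Finset V} {v : V} :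
    v ∈ extN G W ↔ v ∉ W ∧ ∃ w ∈ W, G.Adj v w := by
  simp [extN]

private lemma mem_extN_con {W : Finset {v : V // v ≠ a}} {v : {v : V // v ≠ a}} :
    v ∈ extN (Gcon G a) W ↔ v ∉ W ∧ ∃ w ∈ W, (Gcon G a).Adj v w := by
  simp [extN]

private lemma adj_con {u v : {v : V // v ≠ a}} :
    (Gcon G a).Adj u v ↔ u ≠ v ∧ (G.Adj u.val v.val ∨ (G.Adj u.val a ∧ G.Adj a v.val)) :=
  Iff.rfl

private lemma mem_map_val {W' : Finset {v : V // v ≠ a}} {v : V} :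
    v ∈ W'.map (Function.Embedding.subtype _) ↔
      ∃ h : v ≠ a, (⟨v, h⟩ : {v : V // v ≠ a}) ∈ W' := by
  simp only [Finset.mem_map, Function.Embedding.coe_subtype, Subtype.exists]
  constructor
  · rintro ⟨w, hw, hm, rfl⟩; exact ⟨hw, hm⟩
  · rintro ⟨h, hm⟩; exact ⟨v, h, hm, rfl⟩

private lemma a_not_mem_map (W' : Finset {v : V // v ≠ a}) :
    a ∉ W'.map (Function.Embedding.subtype _) := by
  simp [mem_map_val]

private lemma extN_con_insert (W' : Finset {v : V // v ≠ a})
    (h : ∃ w ∈ W', G.Adj a w.val) :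
    extN G (insert a (W'.map (Function.Embedding.subtype _))) =
      (extN (Gcon G a) W').map (Function.Embedding.subtype _) := by
  obtain ⟨w0, hw0, haw0⟩ := h
  ext v
  by_cases hv : v = a
  · subst hv
    simp [mem_extN, mem_map_val]
  · simp only [mem_extN, mem_extN_con, mem_map_val, Finset.mem_insert, adj_con]
    constructor
    · rintro ⟨hnm, w, hw, hadj⟩
      have hvW' : (⟨v, hv⟩ : {v : V // v ≠ a}) ∉ W' := fun hh => hnm (Or.inr ⟨hv, hh⟩)
      refine ⟨hv, hvW', ?_⟩
      rcases hw with rfl | ⟨hw', hwm⟩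
      · exact ⟨w0, hw0, fun e => hvW' (by rw [e]; exact hw0), Or.inr ⟨hadj, haw0⟩⟩
      · exact ⟨⟨w, hw'⟩, hwm, fun e => hvW' (by rw [e]; exact hwm), Or.inl hadj⟩
    · rintro ⟨hv', hvW', w, hw, -, hadj⟩
      refine ⟨?_, ?_⟩
      · rintro (rfl | ⟨h', hh⟩)
        · exact hv rfl
        · exact hvW' hh
      · rcases hadj with h1 | ⟨h1, h2⟩
        · exact ⟨w.val, Or.inr ⟨w.2, hw⟩, h1⟩
        · exact ⟨a, Or.inl rfl, h1⟩

private lemma extN_con_noadj (W' : Finset {v : V // v ≠ a})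
    (h : ∀ w ∈ W', ¬ G.Adj a w.val) :
    extN G (W'.map (Function.Embedding.subtype _)) =
      (extN (Gcon G a) W').map (Function.Embedding.subtype _) := by
  ext v
  by_cases hv : v = a
  · subst hv
    simp only [mem_extN, mem_map_val]
    constructor
    · rintro ⟨-, w, ⟨hw', hwm⟩, hadj⟩
      exact absurd hadj (h ⟨w, hw'⟩ hwm)
    · rintro ⟨hh, -⟩
      exact absurd rfl hh
  · simp only [mem_extN, mem_extN_con, mem_map_val, adj_con]
    constructor
    · rintro ⟨hnm, w, ⟨hw', hwm⟩, hadj⟩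
      have hvW' : (⟨v, hv⟩ : {v : V // v ≠ a}) ∉ W' := fun hh => hnm ⟨hv, hh⟩
      exact ⟨hv, hvW', ⟨w, hw'⟩, hwm, fun e => hvW' (by rw [e]; exact hwm), Or.inl hadj⟩
    · rintro ⟨hv', hvW', w, hw, -, hadj⟩
      refine ⟨fun hh => hvW' hh.2, ?_⟩
      rcases hadj with h1 | ⟨h1, h2⟩
      · exact ⟨w.val, ⟨w.2, hw⟩, h1⟩
      · exact absurd h2 (h w hw)

private lemma map_subtype_of (W : Finset V) (hW : a ∉ W) :
    ((W.subtype (· ≠ a)).map (Function.Embedding.subtype _)) = W := by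
  rw [Finset.subtype_map]
  exact Finset.filter_true_of_mem (fun v hv => fun e => hW (e ▸ hv))

private lemma subtype_map' (W' : Finset {v : V // v ≠ a}) :
    (W'.map (Function.Embedding.subtype _)).subtype (· ≠ a) = W' := by
  ext u
  simp only [Finset.mem_subtype, mem_map_val]
  constructor
  · rintro ⟨h, hm⟩; convert hm
  · intro hm; exact ⟨u.2, by convert hm⟩

end Aux

theorem J_cond_mem_with_neighbor {V : Type} [Fintype V] (G : SimpleGraph V) (a : V) (x y : ℝ) :
    ∑ W ∈ Finset.univ.filter
        (fun W : Finset V => a ∈ W ∧ ∃ w ∈ W, G.Adj a w),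
      x ^ W.card * y ^ (extN G W).card
      = x * (JP (Gcon G a) x y -
          ∑ W ∈ Finset.univ.filter
            (fun W : Finset V => a ∉ W ∧ ∀ w ∈ W, ¬ G.Adj a w),
          x ^ W.card * y ^ (extN G W).card) := by
  classical
  set S1 : ℝ := ∑ W' ∈ univ.filter (fun W' : Finset {v : V // v ≠ a} => ∃ w ∈ W', G.Adj a w.val),
      x ^ W'.card * y ^ (extN (Gcon G a) W').card with hS1
  set S2 : ℝ := ∑ W' ∈ univ.filter (fun W' : Finset {v : V // v ≠ a} => ¬ ∃ w ∈ W', G.Adj a w.val),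
      x ^ W'.card * y ^ (extN (Gcon G a) W').card with hS2
  have split : JP (Gcon G a) x y = S1 + S2 := by
    rw [JP, hS1, hS2]
    exact (Finset.sum_filter_add_sum_filter_not _ _ _).symm
  have h2 : (∑ W ∈ Finset.univ.filter
        (fun W : Finset V => a ∉ W ∧ ∀ w ∈ W, ¬ G.Adj a w),
      x ^ W.card * y ^ (extN G W).card) = S2 := by
    rw [hS2]
    refine Finset.sum_bij' (fun W _ => W.subtype (· ≠ a))
      (fun W' _ => W'.map (Function.Embedding.subtype _)) ?_ ?_ ?_ ?_ ?_
    · intro W hW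
      simp only [Finset.mem_filter, Finset.mem_univ, true_and] at hW ⊢
      rintro ⟨w, hw, hadj⟩
      rw [Finset.mem_subtype] at hw
      exact hW.2 w.val hw hadj
    · intro W' hW'
      simp only [Finset.mem_filter, Finset.mem_univ, true_and] at hW' ⊢
      push_neg at hW'
      refine ⟨a_not_mem_map a W', fun w hw hadj => ?_⟩
      rw [mem_map_val] at hw
      obtain ⟨h, hm⟩ := hw
      exact hW' ⟨w, h⟩ hm hadj
    · intro W hW
      simp only [Finset.mem_filter, Finset.mem_univ, true_and] at hW
      exact map_subtype_of a W hW.1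
    · intro W' _
      exact subtype_map' a W'
    · intro W hW
      simp only [Finset.mem_filter, Finset.mem_univ, true_and] at hW
      have hWeq : W = ((W.subtype (· ≠ a)).map (Function.Embedding.subtype _)) :=
        (map_subtype_of a W hW.1).symm
      have hcard : W.card = (W.subtype (· ≠ a)).card := by
        conv_lhs => rw [hWeq]
        rw [Finset.card_map]
      have hno : ∀ w ∈ W.subtype (· ≠ a), ¬ G.Adj a w.val := by
        intro w hw
        rw [Finset.mem_subtype] at hw
        exact hW.2 w.val hw
      have hext : extN G W =
          (extN (Gcon G a) (W.subtype (· ≠ a))).map (Function.Embedding.subtype _) := by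
        conv_lhs => rw [hWeq]
        exact extN_con_noadj G a _ hno
      rw [hcard, hext, Finset.card_map]
  have h1 : (∑ W ∈ Finset.univ.filter
        (fun W : Finset V => a ∈ W ∧ ∃ w ∈ W, G.Adj a w),
      x ^ W.card * y ^ (extN G W).card) = x * S1 := by
    rw [hS1, Finset.mul_sum]
    refine Finset.sum_bij' (fun W _ => (W.erase a).subtype (· ≠ a))
      (fun W' _ => insert a (W'.map (Function.Embedding.subtype _))) ?_ ?_ ?_ ?_ ?_
    · intro W hW
      simp only [Finset.mem_filter, Finset.mem_univ, true_and] at hW ⊢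
      obtain ⟨haW, w, hw, hadj⟩ := hW
      have hwa : w ≠ a := fun e => G.loopless.irrefl a (e ▸ hadj)
      exact ⟨⟨w, hwa⟩, by rw [Finset.mem_subtype]; exact Finset.mem_erase.mpr ⟨hwa, hw⟩, hadj⟩
    · intro W' hW'
      simp only [Finset.mem_filter, Finset.mem_univ, true_and] at hW' ⊢
      obtain ⟨w, hw, hadj⟩ := hW'
      exact ⟨Finset.mem_insert_self _ _, w.val,
        Finset.mem_insert_of_mem (by rw [mem_map_val]; exact ⟨w.2, hw⟩), hadj⟩
    · intro W hW
      simp only [Finset.mem_filter, Finset.mem_univ, true_and] at hW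
      show insert a (((W.erase a).subtype (· ≠ a)).map (Function.Embedding.subtype _)) = W
      rw [map_subtype_of a _ (Finset.notMem_erase a W), Finset.insert_erase hW.1]
    · intro W' _
      show ((insert a (W'.map (Function.Embedding.subtype _))).erase a).subtype (· ≠ a) = W'
      rw [Finset.erase_insert (a_not_mem_map a W'), subtype_map']
    · intro W hW
      simp only [Finset.mem_filter, Finset.mem_univ, true_and] at hW
      set W' := (W.erase a).subtype (· ≠ a) with hW'def
      have hWeq : W = insert a (W'.map (Function.Embedding.subtype _)) := by
        rw [hW'def, map_subtype_of a _ (Finset.notMem_erase a W), Finset.insert_erase hW.1]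
      have hcard : W.card = W'.card + 1 := by
        conv_lhs => rw [hWeq]
        rw [Finset.card_insert_of_notMem (a_not_mem_map a W'), Finset.card_map]
      have hex : ∃ w ∈ W', G.Adj a w.val := by
        obtain ⟨w, hw, hadj⟩ := hW.2
        have hwa : w ≠ a := fun e => G.loopless.irrefl a (e ▸ hadj)
        refine ⟨⟨w, hwa⟩, ?_, hadj⟩
        rw [hW'def, Finset.mem_subtype]
        exact Finset.mem_erase.mpr ⟨hwa, hw⟩
      have hext : extN G W = (extN (Gcon G a) W').map (Function.Embedding.subtype _) := by
        conv_lhs => rw [hWeq]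
        exact extN_con_insert G a _ hex
      rw [hcard, hext, Finset.card_map, pow_succ]
      ring
  rw [h1, split, h2]
  ring
end

section
/- Let a be a vertex of a graph G. Then Σ_{W ⊆ V(G), a ∉ W} x^{|W|} y^{|N(W)|} = y · J(G − a; x, y) + (1 − y) · Σ_{W : N[a] ∩ W = ∅} x^{|W|} y^{|N(W)|}. -/
open Finset
open scoped Classical

theorem J_cond_not_mem {V : Type} [Fintype V] (G : SimpleGraph V) (a : V) (x y : ℝ) :
    ∑ W ∈ Finset.univ.filter (fun W : Finset V => a ∉ W),
      x ^ W.card * y ^ (extN G W).card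
      = y * JP (Gdel G a) x y +
        (1 - y) * ∑ W ∈ Finset.univ.filter
            (fun W : Finset V => a ∉ W ∧ ∀ w ∈ W, ¬ G.Adj a w),
          x ^ W.card * y ^ (extN G W).card := by
  classical
  set emb : {v : V // v ≠ a} ↪ V := Function.Embedding.subtype _ with hembdef
  have herase : ∀ W' : Finset {v : V // v ≠ a},
      (extN G (W'.map emb)).erase a = (extN (Gdel G a) W').map emb := by
    intro W'
    ext v
    simp only [mem_erase, extN, mem_filter, mem_univ, true_and, Finset.mem_map,
      hembdef, Function.Embedding.coe_subtype]
    constructor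
    · rintro ⟨hva, hv, w, hw, hadj⟩
      obtain ⟨w', hw', rfl⟩ := hw
      refine ⟨⟨v, hva⟩, ⟨?_, ⟨w', hw', ?_⟩⟩, rfl⟩
      · intro h; exact hv ⟨⟨v, hva⟩, h, rfl⟩
      · simpa [Gdel, SimpleGraph.comap] using hadj
    · rintro ⟨⟨v, hva⟩, ⟨hv, w', hw', hadj⟩, rfl⟩
      refine ⟨hva, ?_, ⟨w', ⟨w', hw', rfl⟩, ?_⟩⟩
      · rintro ⟨u, hu, hue⟩
        apply hv
        have : u = ⟨v, hva⟩ := Subtype.ext hue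
        rwa [this] at hu
      · simpa [Gdel, SimpleGraph.comap] using hadj
  have hmem : ∀ W' : Finset {v : V // v ≠ a},
      a ∈ extN G (W'.map emb) ↔ ∃ w ∈ W', G.Adj a w.val := by
    intro W'
    simp only [extN, mem_filter, mem_univ, true_and, Finset.mem_map, hembdef,
      Function.Embedding.coe_subtype]
    constructor
    · rintro ⟨-, w, ⟨w', hw', rfl⟩, hadj⟩; exact ⟨w', hw', hadj⟩
    · rintro ⟨w', hw', hadj⟩
      refine ⟨?_, ⟨w'.val, ⟨w', hw', rfl⟩, hadj⟩⟩
      rintro ⟨u, -, hue⟩; exact u.prop hue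
  have hcard : ∀ W' : Finset {v : V // v ≠ a},
      (extN G (W'.map emb)).card
        = (extN (Gdel G a) W').card + (if ∃ w ∈ W', G.Adj a w.val then 1 else 0) := by
    intro W'
    by_cases h : ∃ w ∈ W', G.Adj a w.val
    · rw [if_pos h]
      have ha : a ∈ extN G (W'.map emb) := (hmem W').mpr h
      have := Finset.card_erase_add_one ha
      rw [herase W', Finset.card_map] at this
      omega
    · rw [if_neg h]
      have ha : a ∉ extN G (W'.map emb) := fun hh => h ((hmem W').mp hh)
      have := Finset.erase_eq_of_notMem ha
      rw [herase W'] at this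
      rw [← this, Finset.card_map]
      omega
  -- inverse maps for reindexing
  have hinv1 : ∀ W : Finset V, a ∉ W → (W.subtype (· ≠ a)).map emb = W := by
    intro W haW
    rw [hembdef, Finset.subtype_map, Finset.filter_eq_self]
    intro v hv hva; exact haW (hva ▸ hv)
  have hinv2 : ∀ W' : Finset {v : V // v ≠ a}, (W'.map emb).subtype (· ≠ a) = W' := by
    intro W'
    ext w
    simp only [Finset.mem_subtype, Finset.mem_map, hembdef, Function.Embedding.coe_subtype]
    constructor
    · rintro ⟨u, hu, hue⟩
      rwa [show u = w from Subtype.ext hue] at hu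
    · intro hw; exact ⟨w, hw, rfl⟩
  -- reindex LHS
  have hL : ∑ W ∈ Finset.univ.filter (fun W : Finset V => a ∉ W),
        x ^ W.card * y ^ (extN G W).card
      = ∑ W' : Finset {v : V // v ≠ a},
          x ^ W'.card * y ^ (extN G (W'.map emb)).card := by
    refine Finset.sum_bij' (fun W _ => W.subtype (· ≠ a)) (fun W' _ => W'.map emb)
      (fun W hW => Finset.mem_univ _) (fun W' _ => ?_) (fun W hW => ?_)
      (fun W' _ => hinv2 W') (fun W hW => ?_)
    · simp only [mem_filter, mem_univ, true_and, Finset.mem_map, hembdef,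
        Function.Embedding.coe_subtype]
      rintro ⟨u, -, hue⟩; exact u.prop hue
    · simp only [mem_filter, mem_univ, true_and] at hW
      exact hinv1 W hW
    · simp only [mem_filter, mem_univ, true_and] at hW
      have hfil : W.filter (fun x => x ≠ a) = W :=
        Finset.filter_true_of_mem (fun v hv hva => hW (by rwa [hva] at hv))
      rw [hinv1 W hW, Finset.card_subtype, hfil]
  -- reindex RHS conditional sum
  have hR : ∑ W ∈ Finset.univ.filter
        (fun W : Finset V => a ∉ W ∧ ∀ w ∈ W, ¬ G.Adj a w),
        x ^ W.card * y ^ (extN G W).card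
      = ∑ W' ∈ Finset.univ.filter
          (fun W' : Finset {v : V // v ≠ a} => ¬ ∃ w ∈ W', G.Adj a w.val),
          x ^ W'.card * y ^ (extN (Gdel G a) W').card := by
    refine Finset.sum_bij' (fun W _ => W.subtype (· ≠ a)) (fun W' _ => W'.map emb)
      (fun W hW => ?_) (fun W' hW' => ?_) (fun W hW => ?_)
      (fun W' _ => hinv2 W') (fun W hW => ?_)
    · simp only [mem_filter, mem_univ, true_and] at hW ⊢
      rintro ⟨w', hw', hadj⟩
      rw [Finset.mem_subtype] at hw'
      exact hW.2 w'.val hw' hadj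
    · simp only [mem_filter, mem_univ, true_and] at hW' ⊢
      constructor
      · simp only [Finset.mem_map, hembdef, Function.Embedding.coe_subtype]
        rintro ⟨u, -, hue⟩; exact u.prop hue
      · intro w hw hadj
        rw [hembdef, Finset.mem_map] at hw
        obtain ⟨w', hw', rfl⟩ := hw
        exact hW' ⟨w', hw', hadj⟩
    · simp only [mem_filter, mem_univ, true_and] at hW
      exact hinv1 W hW.1
    · simp only [mem_filter, mem_univ, true_and] at hW
      have hWm := hinv1 W hW.1
      have hnoadj : ¬ ∃ w ∈ W.subtype (· ≠ a), G.Adj a w.val := by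
        rintro ⟨w', hw', hadj⟩
        rw [Finset.mem_subtype] at hw'
        exact hW.2 w'.val hw' hadj
      have hc := hcard (W.subtype (· ≠ a))
      rw [if_neg hnoadj, hWm] at hc
      have hfil : W.filter (fun x => x ≠ a) = W :=
        Finset.filter_true_of_mem (fun v hv hva => hW.1 (by rwa [hva] at hv))
      rw [hc, Finset.card_subtype, hfil]
      ring_nf
  rw [hL, hR]
  unfold JP
  rw [Finset.mul_sum, Finset.mul_sum, Finset.sum_filter, ← Finset.sum_add_distrib]
  refine Finset.sum_congr rfl fun W' _ => ?_
  rw [hcard W']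
  by_cases h : ∃ w ∈ W', G.Adj a w.val
  · rw [if_pos h, if_neg (by exact fun hn => hn h)]
    ring
  · rw [if_neg h, if_pos h]
    ring
end

section
/- Let a be a vertex of a graph G. Then, as a polynomial identity, (1−x−y) · Σ_{W : a ∈ W} x^{|W|} y^{|N_G(W)|} = x · ( (1−y) J(G∖a) + y J(G−a) + (1−y) y^{|N(a)|} J(G − N[a]) − J(G) ). -/
open Finset
open scoped Classical

section Aux
variable {V : Type} [Fintype V] (G : SimpleGraph V) (a : V)

/-- reindex a sum over finsets of a subtype -/
lemma sum_subtype_finsets (p : V → Prop) [DecidablePred p] (f : Finset V → ℝ) :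
    ∑ W' : Finset {v // p v}, f (W'.map (Function.Embedding.subtype p))
      = ∑ W ∈ Finset.univ.filter (fun W : Finset V => ∀ v ∈ W, p v), f W := by
  apply Finset.sum_nbij' (fun W' => W'.map (Function.Embedding.subtype p))
    (fun W => W.subtype p)
  · intro W' _; simp only [mem_filter, mem_univ, true_and]
    intro v hv; rcases Finset.mem_map.1 hv with ⟨u, _, rfl⟩; exact u.2
  · intro W hW; exact mem_univ _
  · intro W' _; ext v; simp; exact fun _ => v.2
  · intro W hW; simp only [mem_filter, mem_univ, true_and] at hW
    rw [Finset.subtype_map, Finset.filter_true_of_mem hW]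
  · intro W' _; rfl

lemma sum_mem_insert (f : Finset V → ℝ) :
    ∑ W ∈ Finset.univ.filter (fun W : Finset V => a ∈ W), f W
      = ∑ W ∈ Finset.univ.filter (fun W : Finset V => a ∉ W), f (insert a W) := by
  apply Finset.sum_nbij' (fun W => W.erase a) (fun W => insert a W)
  · intro W hW; simp
  · intro W hW; simp
  · intro W hW; simp only [mem_filter, mem_univ, true_and] at hW
    exact Finset.insert_erase hW
  · intro W hW; simp only [mem_filter, mem_univ, true_and] at hW
    exact Finset.erase_insert hW
  · intro W hW; simp only [mem_filter, mem_univ, true_and] at hW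
    rw [Finset.insert_erase hW]

lemma extN_insert {W : Finset V} (h : a ∉ W) :
    extN G (insert a W)
      = (extN G W).erase a ∪ ((Finset.univ.filter (fun v => G.Adj a v)) \ (W ∪ extN G W)) := by
  ext v
  simp only [extN, mem_filter, mem_univ, true_and, mem_insert, mem_union, mem_erase, mem_sdiff]
  constructor
  · rintro ⟨hv, w, hw, hadj⟩
    push_neg at hv
    obtain ⟨hva, hvW⟩ := hv
    by_cases ht : ∃ w ∈ W, G.Adj v w
    · exact Or.inl ⟨hva, hvW, ht⟩
    · rcases hw with rfl | hwW
      · refine Or.inr ⟨hadj.symm, ?_⟩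
        rintro (hmem | ⟨_, hE⟩)
        exacts [hvW hmem, ht hE]
      · exact absurd ⟨w, hwW, hadj⟩ ht
  · rintro (⟨hva, hvW, w, hwW, hadj⟩ | ⟨hadj, hni⟩)
    · exact ⟨by push_neg; exact ⟨hva, hvW⟩, w, Or.inr hwW, hadj⟩
    · have hvW : v ∉ W := fun hmem => hni (Or.inl hmem)
      exact ⟨by push_neg; exact ⟨hadj.ne', hvW⟩, a, Or.inl rfl, hadj.symm⟩

lemma disj_insert {W : Finset V} :
    Disjoint ((extN G W).erase a)
      ((Finset.univ.filter (fun v => G.Adj a v)) \ (W ∪ extN G W)) := by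
  rw [Finset.disjoint_left]
  intro v hv hv2
  rcases Finset.mem_sdiff.1 hv2 with ⟨_, hni⟩
  exact hni (Finset.mem_union_right _ (Finset.mem_of_mem_erase hv))

lemma card_extN_insert {W : Finset V} (h : a ∉ W) :
    (extN G (insert a W)).card
      = ((extN G W).erase a).card
        + ((Finset.univ.filter (fun v => G.Adj a v)) \ (W ∪ extN G W)).card := by
  rw [extN_insert G a h, Finset.card_union_of_disjoint (disj_insert G a)]

lemma mem_extN_a {W : Finset V} (h : a ∉ W) :
    a ∈ extN G W ↔ ∃ w ∈ W, G.Adj a w := by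
  simp only [extN, mem_filter, mem_univ, true_and]
  exact ⟨fun hx => hx.2, fun hx => ⟨h, hx⟩⟩

lemma card_extN_split {W : Finset V} (h : a ∉ W) :
    (extN G W).card
      = ((extN G W).erase a).card + (if ∃ w ∈ W, G.Adj a w then 1 else 0) := by
  by_cases ht : ∃ w ∈ W, G.Adj a w
  · rw [if_pos ht, Finset.card_erase_of_mem ((mem_extN_a G a h).2 ht)]
    have : 0 < (extN G W).card := Finset.card_pos.2 ⟨a, (mem_extN_a G a h).2 ht⟩
    omega
  · rw [if_neg ht, Finset.erase_eq_of_notMem (fun hx => ht ((mem_extN_a G a h).1 hx)), add_zero]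

lemma extN_del_map (W' : Finset {v : V // v ≠ a}) :
    (extN (Gdel G a) W').map (Function.Embedding.subtype _)
      = (extN G (W'.map (Function.Embedding.subtype _))).erase a := by
  ext v
  simp only [extN, Finset.mem_map, Finset.mem_filter, Finset.mem_univ, true_and,
    Finset.mem_erase, Function.Embedding.coe_subtype]
  simp only [Gdel]
  constructor
  · rintro ⟨⟨u, hu⟩, ⟨hnW, w, hwW, hadj⟩, rfl⟩
    refine ⟨hu, ?_, ⟨w, ⟨w, hwW, rfl⟩, ?_⟩⟩
    · intro ⟨z, hz, hze⟩
      exact hnW (by rwa [show z = ⟨u, hu⟩ from Subtype.ext hze] at hz)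
    · simpa [SimpleGraph.comap_adj] using hadj
  · rintro ⟨hva, hnW, w, ⟨w', hw', rfl⟩, hadj⟩
    refine ⟨⟨v, hva⟩, ⟨?_, w', hw', ?_⟩, rfl⟩
    · intro hmem; exact hnW ⟨⟨v, hva⟩, hmem, rfl⟩
    · simpa [SimpleGraph.comap_adj] using hadj

lemma extN_con_map_t (W' : Finset {v : V // v ≠ a})
    (ht : ∃ w ∈ W'.map (Function.Embedding.subtype _), G.Adj a w) :
    (extN (Gcon G a) W').map (Function.Embedding.subtype _)
      = extN G (insert a (W'.map (Function.Embedding.subtype _))) := by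
  obtain ⟨w0, hw0W, hw0adj⟩ := ht
  rcases Finset.mem_map.1 hw0W with ⟨z0, hz0, rfl⟩
  ext v
  simp only [extN, Finset.mem_map, Finset.mem_filter, Finset.mem_univ, true_and,
    Finset.mem_insert, Function.Embedding.coe_subtype]
  simp only [Gcon]
  constructor
  · rintro ⟨u, ⟨hnW, w, hwW, hne, hadj⟩, rfl⟩
    refine ⟨?_, ?_⟩
    · rintro (h | ⟨z, hz, hze⟩)
      · exact u.2 h
      · exact hnW (by rwa [Subtype.ext hze] at hz)
    · rcases hadj with hadj | ⟨hua, haw⟩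
      · exact ⟨↑w, Or.inr ⟨w, hwW, rfl⟩, hadj⟩
      · exact ⟨a, Or.inl rfl, hua⟩
  · rintro ⟨hnv, w, hw, hadj⟩
    have hva : v ≠ a := fun h => hnv (Or.inl h)
    have hvnW : (⟨v, hva⟩ : {v : V // v ≠ a}) ∉ W' :=
      fun hmem => hnv (Or.inr ⟨⟨v, hva⟩, hmem, rfl⟩)
    refine ⟨⟨v, hva⟩, ⟨hvnW, ?_⟩, rfl⟩
    rcases hw with rfl | ⟨z, hz, rfl⟩
    · refine ⟨z0, hz0, ?_, Or.inr ⟨hadj, hw0adj⟩⟩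
      intro h; exact hvnW (by rw [h]; exact hz0)
    · refine ⟨z, hz, ?_, Or.inl hadj⟩
      intro h; exact hvnW (by rw [h]; exact hz)

lemma extN_con_map_f (W' : Finset {v : V // v ≠ a})
    (ht : ¬ ∃ w ∈ W'.map (Function.Embedding.subtype _), G.Adj a w) :
    (extN (Gcon G a) W').map (Function.Embedding.subtype _)
      = (extN G (W'.map (Function.Embedding.subtype _))).erase a := by
  ext v
  simp only [extN, Finset.mem_map, Finset.mem_filter, Finset.mem_univ, true_and,
    Finset.mem_erase, Function.Embedding.coe_subtype]
  simp only [Gcon]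
  constructor
  · rintro ⟨u, ⟨hnW, w, hwW, hne, hadj⟩, rfl⟩
    refine ⟨u.2, ?_, ?_⟩
    · rintro ⟨z, hz, hze⟩
      exact hnW (by rwa [Subtype.ext hze] at hz)
    · rcases hadj with hadj | ⟨hua, haw⟩
      · exact ⟨↑w, ⟨w, hwW, rfl⟩, hadj⟩
      · exact absurd ⟨↑w, Finset.mem_map.2 ⟨w, hwW, rfl⟩, haw⟩ ht
  · rintro ⟨hva, hnW, w, ⟨w', hw', rfl⟩, hadj⟩
    have hvnW : (⟨v, hva⟩ : {v : V // v ≠ a}) ∉ W' :=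
      fun hmem => hnW ⟨⟨v, hva⟩, hmem, rfl⟩
    refine ⟨⟨v, hva⟩, ⟨hvnW, w', hw', ?_, Or.inl hadj⟩, rfl⟩
    intro h; exact hvnW (by rw [h]; exact hw')

lemma extN_gds_map (W'' : Finset {v : V // v ∉ ({v : V | v = a ∨ G.Adj a v} : Set V)}) :
    (extN (GdelSet G {v : V | v = a ∨ G.Adj a v}) W'').map (Function.Embedding.subtype _)
      = (extN G (W''.map (Function.Embedding.subtype _))).filter
          (fun v => ¬(v = a ∨ G.Adj a v)) := by
  ext v
  simp only [extN, Finset.mem_map, Finset.mem_filter, Finset.mem_univ, true_and,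
    Function.Embedding.coe_subtype]
  simp only [GdelSet, Set.mem_setOf_eq]
  constructor
  · rintro ⟨u, ⟨hnW, w, hwW, hadj⟩, rfl⟩
    refine ⟨⟨?_, ↑w, ⟨w, hwW, rfl⟩, ?_⟩, u.2⟩
    · rintro ⟨z, hz, hze⟩
      exact hnW (by rwa [Subtype.ext hze] at hz)
    · simpa [SimpleGraph.comap_adj] using hadj
  · rintro ⟨⟨hnW, w, ⟨w', hw', rfl⟩, hadj⟩, hq⟩
    refine ⟨⟨v, hq⟩, ⟨?_, w', hw', ?_⟩, rfl⟩
    · intro hmem; exact hnW ⟨⟨v, hq⟩, hmem, rfl⟩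
    · simpa [SimpleGraph.comap_adj] using hadj

lemma card_extN_gds {W : Finset V} (hW : ∀ v ∈ W, ¬(v = a ∨ G.Adj a v)) :
    (extN G (insert a W)).card
      = ((extN G W).filter (fun v => ¬(v = a ∨ G.Adj a v))).card
        + (Finset.univ.filter (fun v => G.Adj a v)).card := by
  have haW : a ∉ W := fun ha => hW a ha (Or.inl rfl)
  rw [← Finset.card_union_of_disjoint]
  · congr 1
    ext v
    simp only [extN, mem_filter, mem_univ, true_and, mem_insert, mem_union, not_or]
    constructor
    · rintro ⟨⟨hva, hvW⟩, w, hw, hadj⟩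
      by_cases hav : G.Adj a v
      · exact Or.inr hav
      · rcases hw with rfl | hwW
        · exact absurd hadj.symm hav
        · exact Or.inl ⟨⟨hvW, w, hwW, hadj⟩, hva, hav⟩
    · rintro (⟨⟨hvW, w, hwW, hadj⟩, hq⟩ | hav)
      · exact ⟨⟨hq.1, hvW⟩, w, Or.inr hwW, hadj⟩
      · refine ⟨⟨hav.ne', fun hmem => hW v hmem (Or.inr hav)⟩, a, Or.inl rfl, hav.symm⟩
  · rw [Finset.disjoint_left]
    intro v hv hv2
    exact (Finset.mem_filter.1 hv).2 (Or.inr (Finset.mem_filter.1 hv2).2)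

lemma JP_reindex (p : V → Prop) [DecidablePred p] (H : SimpleGraph {v // p v})
    (g : Finset V → ℕ)
    (hg : ∀ W' : Finset {v // p v},
      (extN H W').card = g (W'.map (Function.Embedding.subtype p))) (x y : ℝ) :
    JP H x y = ∑ W ∈ Finset.univ.filter (fun W : Finset V => ∀ v ∈ W, p v),
      x ^ W.card * y ^ g W := by
  rw [JP, ← sum_subtype_finsets p (fun W => x ^ W.card * y ^ g W)]
  exact Finset.sum_congr rfl (fun W' _ => by rw [← Finset.card_map, hg])

lemma filter_forall_ne :
    (Finset.univ.filter (fun W : Finset V => ∀ v ∈ W, v ≠ a))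
      = Finset.univ.filter (fun W : Finset V => a ∉ W) := by
  ext W
  simp only [mem_filter, mem_univ, true_and]
  exact ⟨fun h ha => h a ha rfl, fun h v hv hva => h (hva ▸ hv)⟩

end Aux

theorem J_cond_mem {V : Type} [Fintype V] (G : SimpleGraph V) (a : V) (x y : ℝ) :
    (1 - x - y) * ∑ W ∈ Finset.univ.filter (fun W : Finset V => a ∈ W),
      x ^ W.card * y ^ (extN G W).card
      = x * ((1 - y) * JP (Gcon G a) x y + y * JP (Gdel G a) x y
          + (1 - y) * y ^ (Finset.univ.filter (fun v => G.Adj a v)).card *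
              JP (GdelSet G {v : V | v = a ∨ G.Adj a v}) x y
          - JP G x y) := by
  classical
  set d := (Finset.univ.filter (fun v => G.Adj a v)).card with hd
  set s := Finset.univ.filter (fun W : Finset V => a ∉ W) with hs
  set F : Finset V → ℝ :=
    fun W => x ^ (insert a W).card * y ^ (extN G (insert a W)).card with hF
  set A : Finset V → ℝ := fun W => x ^ W.card *
    y ^ (if ∃ w ∈ W, G.Adj a w then (extN G (insert a W)).card
         else ((extN G W).erase a).card) with hA
  set B : Finset V → ℝ := fun W => x ^ W.card * y ^ ((extN G W).erase a).card with hB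
  set C : Finset V → ℝ := fun W =>
    if ∀ v ∈ W, ¬(v = a ∨ G.Adj a v)
    then x ^ W.card * y ^ ((extN G W).filter (fun v => ¬(v = a ∨ G.Adj a v))).card
    else 0 with hC
  set D : Finset V → ℝ := fun W => x ^ W.card * y ^ (extN G W).card with hD
  have hLHS : ∑ W ∈ Finset.univ.filter (fun W : Finset V => a ∈ W),
      x ^ W.card * y ^ (extN G W).card = ∑ W ∈ s, F W :=
    sum_mem_insert a (fun W => x ^ W.card * y ^ (extN G W).card)
  have hcon : JP (Gcon G a) x y = ∑ W ∈ s, A W := by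
    rw [hs, ← filter_forall_ne (a := a), hA]
    apply JP_reindex
    intro W'
    by_cases h : ∃ w ∈ W'.map (Function.Embedding.subtype _), G.Adj a w
    · rw [if_pos h, ← extN_con_map_t G a W' h, Finset.card_map]
    · rw [if_neg h, ← extN_con_map_f G a W' h, Finset.card_map]
  have hdel : JP (Gdel G a) x y = ∑ W ∈ s, B W := by
    rw [hs, ← filter_forall_ne (a := a), hB]
    apply JP_reindex
    intro W'
    rw [← extN_del_map G a W', Finset.card_map]
  have hgds : JP (GdelSet G {v : V | v = a ∨ G.Adj a v}) x y = ∑ W ∈ s, C W := by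
    have h1 : JP (GdelSet G {v : V | v = a ∨ G.Adj a v}) x y
        = ∑ W ∈ Finset.univ.filter
            (fun W : Finset V => ∀ v ∈ W, v ∉ ({v : V | v = a ∨ G.Adj a v} : Set V)),
          x ^ W.card * y ^ ((extN G W).filter (fun v => ¬(v = a ∨ G.Adj a v))).card := by
      apply JP_reindex
      intro W''
      rw [← extN_gds_map G a W'', Finset.card_map]
    rw [h1, hC, hs, Finset.sum_filter, Finset.sum_filter]
    apply Finset.sum_congr rfl
    intro W _
    by_cases h2 : ∀ v ∈ W, ¬(v = a ∨ G.Adj a v)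
    · have h3 : a ∉ W := fun ha => h2 a ha (Or.inl rfl)
      have h2' : ∀ v ∈ W, v ∉ ({v : V | v = a ∨ G.Adj a v} : Set V) := h2
      simp only [if_pos h2, if_pos h2', if_pos h3]
    · have h2' : ¬ ∀ v ∈ W, v ∉ ({v : V | v = a ∨ G.Adj a v} : Set V) := h2
      simp only [if_neg h2, if_neg h2', ite_self]
  have hG : JP G x y = (∑ W ∈ s, F W) + ∑ W ∈ s, D W := by
    rw [JP, ← Finset.sum_filter_add_sum_filter_not Finset.univ (fun W : Finset V => a ∈ W)]
    rw [hLHS]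
  have hpt : ∀ W ∈ s, (1 - x - y) * F W
      = x * ((1 - y) * A W + y * B W + (1 - y) * y ^ d * C W - (F W + D W)) := by
    intro W hW
    have haW : a ∉ W := by
      rw [hs] at hW; exact (Finset.mem_filter.1 hW).2
    have h1 : (insert a W).card = W.card + 1 := Finset.card_insert_of_notMem haW
    have h2 : (extN G (insert a W)).card
        = ((extN G W).erase a).card
          + ((Finset.univ.filter (fun v => G.Adj a v)) \ (W ∪ extN G W)).card :=
      card_extN_insert G a haW
    have h3 : (extN G W).card
        = ((extN G W).erase a).card + (if ∃ w ∈ W, G.Adj a w then 1 else 0) :=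
      card_extN_split G a haW
    set k := W.card
    set m := ((extN G W).erase a).card
    set c := ((Finset.univ.filter (fun v => G.Adj a v)) \ (W ∪ extN G W)).card
    by_cases ht : ∃ w ∈ W, G.Adj a w
    · have hCf : ¬ ∀ v ∈ W, ¬(v = a ∨ G.Adj a v) := by
        obtain ⟨w, hw, hadj⟩ := ht
        exact fun h => h w hw (Or.inr hadj)
      rw [hF, hA, hB, hC, hD]
      simp only [if_pos ht, if_neg hCf, h1, h2, h3]
      rw [pow_add y m c, pow_succ x k, pow_succ y m]
      ring
    · have hCt : ∀ v ∈ W, ¬(v = a ∨ G.Adj a v) := by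
        rintro v hv (rfl | hadj)
        exacts [haW hv, ht ⟨v, hv, hadj⟩]
      have hg : (extN G (insert a W)).card
          = ((extN G W).filter (fun v => ¬(v = a ∨ G.Adj a v))).card + d :=
        card_extN_gds G a hCt
      set g := ((extN G W).filter (fun v => ¬(v = a ∨ G.Adj a v))).card
      have hgd : g + d = m + c := by omega
      have hyy : y ^ d * y ^ g = y ^ m * y ^ c := by
        rw [← pow_add, ← pow_add, add_comm d g, hgd]
      rw [hF, hA, hB, hC, hD]
      simp only [if_neg ht, if_pos hCt, h1, h2, h3, add_zero]
      rw [pow_add y m c, pow_succ x k]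
      linear_combination (-(x * (1 - y) * x ^ k)) * hyy
  rw [hLHS, hcon, hdel, hgds, hG]
  calc (1 - x - y) * ∑ W ∈ s, F W = ∑ W ∈ s, (1 - x - y) * F W := by rw [Finset.mul_sum]
    _ = ∑ W ∈ s, x * ((1 - y) * A W + y * B W + (1 - y) * y ^ d * C W - (F W + D W)) :=
        Finset.sum_congr rfl hpt
    _ = x * ((1 - y) * ∑ W ∈ s, A W + y * ∑ W ∈ s, B W
          + (1 - y) * y ^ d * ∑ W ∈ s, C W - ((∑ W ∈ s, F W) + ∑ W ∈ s, D W)) := by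
        simp only [Finset.sum_sub_distrib, Finset.sum_add_distrib, ← Finset.mul_sum]
end

section
/- Suppose vertex v of graph G is domination covered by a neighbour u, i.e., u ∈ N(v) and N[v] ⊆ N[u]. Then J(G) = (x+y)J(G−v) − y(x+y)J(G−u−v) + yJ(G−u) + (1−y)( J(G∖v) − yJ((G−u)∖v) − xJ((G−v)∖u) ) − x(1−y) y^{|N(u)|−1} J(G − N[u]). -/
open Finset
open scoped Classical

noncomputable def nbr2 {V : Type} [Fintype V] (s : Finset V) (r : V → V → Prop)
    (A B : Finset V) : ℕ :=
  (s.filter (fun z => z ∉ A ∧ ∃ w ∈ B, r z w)).card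

noncomputable def mono {V : Type} [Fintype V] (x y : ℝ) (s : Finset V) (r : V → V → Prop)
    (W : Finset V) : ℝ :=
  x ^ W.card * y ^ nbr2 s r W W

lemma cfi {V : Type} [DecidableEq V] {a : V} {t : Finset V} (ha : a ∉ t)
    (p : V → Prop) [DecidablePred p] :
    ((insert a t).filter p).card = (t.filter p).card + (if p a then 1 else 0) := by
  rw [Finset.filter_insert]
  split_ifs with h
  · rw [Finset.card_insert_of_notMem (fun hc => ha (Finset.mem_filter.mp hc).1)]
  · rfl

lemma cfi2 {V : Type} [Fintype V] {a : V} {t : Finset V} (ha : a ∉ t)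
    (r : V → V → Prop) (A B : Finset V) :
    nbr2 (insert a t) r A B = nbr2 t r A B + (if a ∉ A ∧ ∃ w ∈ B, r a w then 1 else 0) := by
  unfold nbr2
  rw [cfi ha]

lemma JP_embed {α : Type} [Fintype α] {V : Type} [Fintype V] (H : SimpleGraph α)
    (f : α ↪ V) (r : V → V → Prop) (hr : ∀ a b : α, H.Adj a b ↔ r (f a) (f b))
    (s : Finset V) (hs : Finset.univ.image f = s) (x y : ℝ) :
    JP H x y = ∑ W ∈ s.powerset, mono x y s r W := by
  simp only [JP, extN, mono, nbr2]
  rw [← Finset.powerset_univ]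
  refine Finset.sum_bij (fun W _ => W.map f) ?_ ?_ ?_ ?_
  · intro W _
    rw [Finset.mem_powerset, ← hs]
    intro z hz
    rw [Finset.mem_map] at hz
    obtain ⟨a, _, rfl⟩ := hz
    exact Finset.mem_image_of_mem f (Finset.mem_univ a)
  · intro W₁ _ W₂ _ h
    exact Finset.map_injective f h
  · intro W hW
    rw [Finset.mem_powerset, ← hs] at hW
    refine ⟨Finset.univ.filter (fun a => f a ∈ W), Finset.mem_univ _, ?_⟩
    ext z
    simp only [Finset.mem_map, Finset.mem_filter, Finset.mem_univ, true_and]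
    constructor
    · rintro ⟨a, ha, rfl⟩; exact ha
    · intro hz
      obtain ⟨a, _, rfl⟩ := Finset.mem_image.mp (hW hz)
      exact ⟨a, hz, rfl⟩
  · intro W _
    congr 1
    · rw [Finset.card_map]
    · congr 1
      refine Finset.card_nbij f ?_ ?_ ?_
      · intro a ha
        simp only [Finset.mem_coe, Finset.mem_filter, Finset.mem_univ, true_and] at ha
        obtain ⟨haW, w, hw, hadj⟩ := ha
        refine Finset.mem_filter.mpr ⟨?_, ?_, ⟨f w, Finset.mem_map_of_mem f hw, (hr a w).mp hadj⟩⟩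
        · rw [← hs]; exact Finset.mem_image_of_mem f (Finset.mem_univ a)
        · intro hc
          obtain ⟨b, hb, hfb⟩ := Finset.mem_map.mp hc
          exact haW (f.injective hfb ▸ hb)
      · intro a _ b _ h; exact f.injective h
      · intro z hz
        simp only [Finset.coe_filter, Set.mem_setOf_eq] at hz
        obtain ⟨hzs, hzW, w', hw', hadj⟩ := hz
        rw [← hs] at hzs
        obtain ⟨a, _, rfl⟩ := Finset.mem_image.mp hzs
        obtain ⟨b, hb, rfl⟩ := Finset.mem_map.mp hw'
        refine ⟨a, ?_, rfl⟩
        simp only [Set.mem_image, Finset.mem_coe, Finset.mem_filter, Finset.mem_univ, true_and]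
        refine ⟨fun hc => hzW (Finset.mem_map_of_mem f hc), b, hb, (hr a b).mpr hadj⟩

lemma key {V : Type} [Fintype V] (G : SimpleGraph V) (u v : V)
    (huv : G.Adj u v) (hcov : ∀ w, G.Adj v w → (w = u ∨ G.Adj u w)) (x y : ℝ)
    (s₀ sT : Finset V)
    (hs₀ : s₀ = Finset.univ.filter (fun z => z ≠ u ∧ z ≠ v))
    (hsT : sT = Finset.univ.filter (fun z => ¬(z = u ∨ G.Adj u z)))
    (W : Finset V) (hW : W ⊆ s₀) :
    mono x y (insert u (insert v s₀)) G.Adj W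
      + mono x y (insert u (insert v s₀)) G.Adj (insert v W)
      + mono x y (insert u (insert v s₀)) G.Adj (insert u W)
      + mono x y (insert u (insert v s₀)) G.Adj (insert u (insert v W))
    = (x + y) * (mono x y (insert u s₀) G.Adj W + mono x y (insert u s₀) G.Adj (insert u W))
      - y * (x + y) * mono x y s₀ G.Adj W
      + y * (mono x y (insert v s₀) G.Adj W + mono x y (insert v s₀) G.Adj (insert v W))
      + (1 - y) * ((mono x y (insert u s₀)
              (fun z w => z ≠ w ∧ (G.Adj z w ∨ (G.Adj z v ∧ G.Adj v w))) W
            + mono x y (insert u s₀)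
              (fun z w => z ≠ w ∧ (G.Adj z w ∨ (G.Adj z v ∧ G.Adj v w))) (insert u W))
          - y * mono x y s₀ (fun z w => z ≠ w ∧ (G.Adj z w ∨ (G.Adj z v ∧ G.Adj v w))) W
          - x * mono x y s₀ (fun z w => z ≠ w ∧ (G.Adj z w ∨ (G.Adj z u ∧ G.Adj u w))) W)
      - x * (1 - y) * y ^ ((Finset.univ.filter (fun w => G.Adj u w)).card - 1) *
          (if ∀ w ∈ W, ¬ G.Adj u w then mono x y sT G.Adj W else 0) := by
  have hne : u ≠ v := huv.ne
  have hmem : ∀ z, z ∈ s₀ ↔ (z ≠ u ∧ z ≠ v) := by intro z; rw [hs₀]; simp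
  have hmemT : ∀ z, z ∈ sT ↔ (z ≠ u ∧ ¬ G.Adj u z) := by
    intro z; rw [hsT]; simp [not_or]
  have hu0 : u ∉ s₀ := fun h => ((hmem u).mp h).1 rfl
  have hv0 : v ∉ s₀ := fun h => ((hmem v).mp h).2 rfl
  have huvs : u ∉ insert v s₀ := by
    simp only [Finset.mem_insert, not_or]
    exact ⟨hne, hu0⟩
  have hWz : ∀ z ∈ W, z ≠ u ∧ z ≠ v := fun z hz => (hmem z).mp (hW hz)
  have hu : u ∉ W := fun h => (hWz u h).1 rfl
  have hv : v ∉ W := fun h => (hWz v h).2 rfl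
  have huvW : u ∉ insert v W := by
    simp only [Finset.mem_insert, not_or]; exact ⟨hne, hu⟩
  have hvuW : v ∉ insert u W := by
    simp only [Finset.mem_insert, not_or]; exact ⟨hne.symm, hv⟩
  have hzv2zu : ∀ z, z ≠ u → G.Adj z v → G.Adj z u :=
    fun z hz h => ((hcov z h.symm).resolve_left hz).symm
  have hBA : (∃ w ∈ W, G.Adj v w) → (∃ w ∈ W, G.Adj u w) := by
    rintro ⟨w, hw, h⟩
    exact ⟨w, hw, (hcov w h).resolve_left (hWz w hw).1⟩
  -- branch-independent base congruences
  have c2 : nbr2 s₀ G.Adj (insert v W) (insert v W) = nbr2 s₀ G.Adj W (insert v W) := by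
    unfold nbr2
    congr 1
    ext z
    simp only [Finset.mem_filter]
    refine and_congr_right fun hz => ?_
    have h := (hmem z).mp hz
    simp [Finset.mem_insert, h.2]
  have c3 : nbr2 s₀ G.Adj (insert u W) (insert u W) = nbr2 s₀ G.Adj W (insert u W) := by
    unfold nbr2
    congr 1
    ext z
    simp only [Finset.mem_filter]
    refine and_congr_right fun hz => ?_
    have h := (hmem z).mp hz
    simp [Finset.mem_insert, h.1]
  have c4 : nbr2 s₀ G.Adj (insert u (insert v W)) (insert u (insert v W))
      = nbr2 s₀ G.Adj W (insert u W) := by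
    unfold nbr2
    congr 1
    ext z
    simp only [Finset.mem_filter]
    refine and_congr_right fun hz => ?_
    obtain ⟨hzu, hzv⟩ := (hmem z).mp hz
    constructor
    · rintro ⟨hnm, w, hw, hadj⟩
      refine ⟨fun h => hnm (Finset.mem_insert_of_mem (Finset.mem_insert_of_mem h)), ?_⟩
      rcases Finset.mem_insert.mp hw with heq | hw'
      · exact ⟨u, Finset.mem_insert_self u W, heq ▸ hadj⟩
      rcases Finset.mem_insert.mp hw' with heq | hw''
      · exact ⟨u, Finset.mem_insert_self u W, hzv2zu z hzu (heq ▸ hadj)⟩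
      · exact ⟨w, Finset.mem_insert_of_mem hw'', hadj⟩
    · rintro ⟨hnm, w, hw, hadj⟩
      refine ⟨?_, w, ?_, hadj⟩
      · simp only [Finset.mem_insert, not_or]
        exact ⟨hzu, hzv, hnm⟩
      rcases Finset.mem_insert.mp hw with heq | hw'
      · exact Finset.mem_insert.mpr (Or.inl heq)
      · exact Finset.mem_insert_of_mem (Finset.mem_insert_of_mem hw')
  have c5 : nbr2 s₀ (fun z w => z ≠ w ∧ (G.Adj z w ∨ (G.Adj z v ∧ G.Adj v w)))
        (insert u W) (insert u W)
      = nbr2 s₀ G.Adj W (insert u W) := by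
    unfold nbr2
    congr 1
    ext z
    simp only [Finset.mem_filter]
    refine and_congr_right fun hz => ?_
    obtain ⟨hzu, hzv⟩ := (hmem z).mp hz
    constructor
    · rintro ⟨hnm, w, hw, -, hor⟩
      have hzW : z ∉ W := fun h => hnm (Finset.mem_insert_of_mem h)
      refine ⟨hzW, ?_⟩
      rcases hor with h | ⟨h1, h2⟩
      · exact ⟨w, hw, h⟩
      · exact ⟨u, Finset.mem_insert_self u W, hzv2zu z hzu h1⟩
    · rintro ⟨hzW, w, hw, hadj⟩
      have hnew : z ≠ w := by
        rcases Finset.mem_insert.mp hw with heq | hw'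
        · exact fun e => hzu (e.trans heq)
        · exact fun e => hzW (e ▸ hw')
      refine ⟨?_, w, hw, hnew, Or.inl hadj⟩
      simp only [Finset.mem_insert, not_or]
      exact ⟨hzu, hzW⟩
  have cQvB : (∃ w ∈ W, G.Adj v w) →
      nbr2 s₀ (fun z w => z ≠ w ∧ (G.Adj z w ∨ (G.Adj z v ∧ G.Adj v w))) W W
      = nbr2 s₀ G.Adj W (insert v W) := by
    intro hB
    unfold nbr2
    congr 1
    ext z
    simp only [Finset.mem_filter]
    refine and_congr_right fun hz => ?_
    obtain ⟨hzu, hzv⟩ := (hmem z).mp hz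
    constructor
    · rintro ⟨hzW, w, hw, -, hor⟩
      refine ⟨hzW, ?_⟩
      rcases hor with h | ⟨h1, -⟩
      · exact ⟨w, Finset.mem_insert_of_mem hw, h⟩
      · exact ⟨v, Finset.mem_insert_self v W, h1⟩
    · rintro ⟨hzW, w, hw, hadj⟩
      refine ⟨hzW, ?_⟩
      rcases Finset.mem_insert.mp hw with heq | hw'
      · obtain ⟨w₀, hw₀, h₀⟩ := hB
        exact ⟨w₀, hw₀, fun e => hzW (e ▸ hw₀), Or.inr ⟨heq ▸ hadj, h₀⟩⟩
      · exact ⟨w, hw', fun e => hzW (e ▸ hw'), Or.inl hadj⟩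
  have cQvNB : (¬∃ w ∈ W, G.Adj v w) →
      nbr2 s₀ (fun z w => z ≠ w ∧ (G.Adj z w ∨ (G.Adj z v ∧ G.Adj v w))) W W
      = nbr2 s₀ G.Adj W W := by
    intro hB
    unfold nbr2
    congr 1
    ext z
    simp only [Finset.mem_filter]
    refine and_congr_right fun hz => ?_
    constructor
    · rintro ⟨hzW, w, hw, -, hor⟩
      rcases hor with h | ⟨-, h2⟩
      · exact ⟨hzW, w, hw, h⟩
      · exact absurd ⟨w, hw, h2⟩ hB
    · rintro ⟨hzW, w, hw, hadj⟩
      exact ⟨hzW, w, hw, fun e => hzW (e ▸ hw), Or.inl hadj⟩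
  have cQuA : (∃ w ∈ W, G.Adj u w) →
      nbr2 s₀ (fun z w => z ≠ w ∧ (G.Adj z w ∨ (G.Adj z u ∧ G.Adj u w))) W W
      = nbr2 s₀ G.Adj W (insert u W) := by
    intro hA
    unfold nbr2
    congr 1
    ext z
    simp only [Finset.mem_filter]
    refine and_congr_right fun hz => ?_
    constructor
    · rintro ⟨hzW, w, hw, -, hor⟩
      refine ⟨hzW, ?_⟩
      rcases hor with h | ⟨h1, -⟩
      · exact ⟨w, Finset.mem_insert_of_mem hw, h⟩
      · exact ⟨u, Finset.mem_insert_self u W, h1⟩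
    · rintro ⟨hzW, w, hw, hadj⟩
      refine ⟨hzW, ?_⟩
      rcases Finset.mem_insert.mp hw with heq | hw'
      · obtain ⟨w₀, hw₀, h₀⟩ := hA
        exact ⟨w₀, hw₀, fun e => hzW (e ▸ hw₀), Or.inr ⟨heq ▸ hadj, h₀⟩⟩
      · exact ⟨w, hw', fun e => hzW (e ▸ hw'), Or.inl hadj⟩
  have cQuNA : (¬∃ w ∈ W, G.Adj u w) →
      nbr2 s₀ (fun z w => z ≠ w ∧ (G.Adj z w ∨ (G.Adj z u ∧ G.Adj u w))) W W
      = nbr2 s₀ G.Adj W W := by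
    intro hA
    unfold nbr2
    congr 1
    ext z
    simp only [Finset.mem_filter]
    refine and_congr_right fun hz => ?_
    constructor
    · rintro ⟨hzW, w, hw, -, hor⟩
      rcases hor with h | ⟨-, h2⟩
      · exact ⟨hzW, w, hw, h⟩
      · exact absurd ⟨w, hw, h2⟩ hA
    · rintro ⟨hzW, w, hw, hadj⟩
      exact ⟨hzW, w, hw, fun e => hzW (e ▸ hw), Or.inl hadj⟩
  simp only [mono, Finset.card_insert_of_notMem huvW, Finset.card_insert_of_notMem hu,
    Finset.card_insert_of_notMem hv, cfi2 huvs, cfi2 hv0, cfi2 hu0]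
  have i2T : u ∉ insert v W ∧ ∃ w ∈ insert v W, G.Adj u w :=
    ⟨huvW, v, Finset.mem_insert_self v W, huv⟩
  have i2F : ¬(v ∉ insert v W ∧ ∃ w ∈ insert v W, G.Adj v w) :=
    fun h => h.1 (Finset.mem_insert_self v W)
  have i3T : v ∉ insert u W ∧ ∃ w ∈ insert u W, G.Adj v w :=
    ⟨hvuW, u, Finset.mem_insert_self u W, huv.symm⟩
  have i3F : ¬(u ∉ insert u W ∧ ∃ w ∈ insert u W, G.Adj u w) :=
    fun h => h.1 (Finset.mem_insert_self u W)
  have i4Fv : ¬(v ∉ insert u (insert v W) ∧ ∃ w ∈ insert u (insert v W), G.Adj v w) :=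
    fun h => h.1 (Finset.mem_insert_of_mem (Finset.mem_insert_self v W))
  have i4Fu : ¬(u ∉ insert u (insert v W) ∧ ∃ w ∈ insert u (insert v W), G.Adj u w) :=
    fun h => h.1 (Finset.mem_insert_self u _)
  have i11F : ¬(u ∉ insert u W ∧ ∃ w ∈ insert u W, u ≠ w ∧ (G.Adj u w ∨ G.Adj u v ∧ G.Adj v w)) :=
    fun h => h.1 (Finset.mem_insert_self u W)
  by_cases hA : ∃ w ∈ W, G.Adj u w
  · have iA : u ∉ W ∧ ∃ w ∈ W, G.Adj u w := ⟨hu, hA⟩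
    have iQ : u ∉ W ∧ ∃ w ∈ W, u ≠ w ∧ (G.Adj u w ∨ G.Adj u v ∧ G.Adj v w) := by
      obtain ⟨w, hw, h⟩ := hA
      exact ⟨hu, w, hw, fun e => hu (e ▸ hw), Or.inl h⟩
    have iL : ¬ ∀ w ∈ W, ¬G.Adj u w := by
      obtain ⟨w, hw, h⟩ := hA
      exact fun hall => hall w hw h
    by_cases hB : ∃ w ∈ W, G.Adj v w
    · have iB : v ∉ W ∧ ∃ w ∈ W, G.Adj v w := ⟨hv, hB⟩
      rw [if_pos iA, if_pos iB, if_pos i2T, if_neg i2F, if_pos i3T, if_neg i3F, if_neg i4Fv,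
        if_neg i4Fu, if_pos iQ, if_neg i11F, if_neg iL, c2, c3, c4, c5, cQvB hB, cQuA hA]
      ring
    · have iBn : ¬(v ∉ W ∧ ∃ w ∈ W, G.Adj v w) := fun h => hB h.2
      rw [if_pos iA, if_neg iBn, if_pos i2T, if_neg i2F, if_pos i3T, if_neg i3F, if_neg i4Fv,
        if_neg i4Fu, if_pos iQ, if_neg i11F, if_neg iL, c2, c3, c4, c5, cQvNB hB, cQuA hA]
      ring
  · have hBn : ¬∃ w ∈ W, G.Adj v w := fun h => hA (hBA h)
    have iAn : ¬(u ∉ W ∧ ∃ w ∈ W, G.Adj u w) := fun h => hA h.2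
    have iBn : ¬(v ∉ W ∧ ∃ w ∈ W, G.Adj v w) := fun h => hBn h.2
    have iQn : ¬(u ∉ W ∧ ∃ w ∈ W, u ≠ w ∧ (G.Adj u w ∨ G.Adj u v ∧ G.Adj v w)) := by
      rintro ⟨-, w, hw, -, h | ⟨-, h2⟩⟩
      · exact hA ⟨w, hw, h⟩
      · exact hA (hBA ⟨w, hw, h2⟩)
    have iLp : ∀ w ∈ W, ¬G.Adj u w := fun w hw h => hA ⟨w, hw, h⟩
    have hDcard : (Finset.univ.filter (fun w => G.Adj u w)).card
        = (Finset.univ.filter (fun z => G.Adj u z ∧ z ≠ v)).card + 1 := by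
      have hDset : Finset.univ.filter (fun w => G.Adj u w)
          = insert v (Finset.univ.filter (fun z => G.Adj u z ∧ z ≠ v)) := by
        ext z
        simp only [Finset.mem_filter, Finset.mem_univ, true_and, Finset.mem_insert]
        constructor
        · intro h
          by_cases hz : z = v
          · exact Or.inl hz
          · exact Or.inr ⟨h, hz⟩
        · rintro (rfl | ⟨h, -⟩)
          · exact huv
          · exact h
      rw [hDset, Finset.card_insert_of_notMem (by simp)]
    have hnC : nbr2 s₀ G.Adj W (insert u W)
        = (Finset.univ.filter (fun z => G.Adj u z ∧ z ≠ v)).card + nbr2 sT G.Adj W W := by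
      unfold nbr2
      have hpart := Finset.card_filter_add_card_filter_not
        (s := s₀.filter (fun z => z ∉ W ∧ ∃ w ∈ insert u W, G.Adj z w)) (p := fun z => G.Adj u z)
      rw [Finset.filter_filter, Finset.filter_filter] at hpart
      have h1 : s₀.filter (fun z => (z ∉ W ∧ ∃ w ∈ insert u W, G.Adj z w) ∧ G.Adj u z)
          = Finset.univ.filter (fun z => G.Adj u z ∧ z ≠ v) := by
        ext z
        constructor
        · intro h
          obtain ⟨hz, ⟨-, -⟩, hadj⟩ := Finset.mem_filter.mp h
          exact Finset.mem_filter.mpr ⟨Finset.mem_univ _, hadj, ((hmem z).mp hz).2⟩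
        · intro h
          obtain ⟨-, hadj, hzv⟩ := Finset.mem_filter.mp h
          have hzu : z ≠ u := fun e => G.loopless.irrefl u (by rw [e] at hadj; exact hadj)
          have hzW : z ∉ W := fun hzW => hA ⟨z, hzW, hadj⟩
          exact Finset.mem_filter.mpr ⟨(hmem z).mpr ⟨hzu, hzv⟩,
            ⟨hzW, u, Finset.mem_insert_self u W, hadj.symm⟩, hadj⟩
      have h2 : s₀.filter (fun z => (z ∉ W ∧ ∃ w ∈ insert u W, G.Adj z w) ∧ ¬G.Adj u z)
          = sT.filter (fun z => z ∉ W ∧ ∃ w ∈ W, G.Adj z w) := by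
        ext z
        constructor
        · intro h
          obtain ⟨hz, ⟨hzW, w, hw, hadj⟩, hnadj⟩ := Finset.mem_filter.mp h
          obtain ⟨hzu, hzv⟩ := (hmem z).mp hz
          have hw' : w ∈ W := by
            rcases Finset.mem_insert.mp hw with heq | h'
            · exact absurd (heq ▸ hadj).symm hnadj
            · exact h'
          exact Finset.mem_filter.mpr ⟨(hmemT z).mpr ⟨hzu, hnadj⟩, hzW, w, hw', hadj⟩
        · intro h
          obtain ⟨hz, hzW, w, hw, hadj⟩ := Finset.mem_filter.mp h
          obtain ⟨hzu, hnadj⟩ := (hmemT z).mp hz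
          have hzv : z ≠ v := fun e => hnadj (e ▸ huv)
          exact Finset.mem_filter.mpr ⟨(hmem z).mpr ⟨hzu, hzv⟩,
            ⟨hzW, w, Finset.mem_insert_of_mem hw, hadj⟩, hnadj⟩
      rw [h1, h2] at hpart
      exact hpart.symm
    rw [if_neg iAn, if_neg iBn, if_pos i2T, if_neg i2F, if_pos i3T, if_neg i3F, if_neg i4Fv,
      if_neg i4Fu, if_neg iQn, if_neg i11F, if_pos iLp, c2, c3, c4, c5, cQvNB hBn, cQuNA hA,
      hnC, hDcard, Nat.add_sub_cancel]
    ring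

theorem J_domination_covered {V : Type} [Fintype V] (G : SimpleGraph V) (u v : V)
    (huv : G.Adj u v) (hcov : ∀ w, G.Adj v w → (w = u ∨ G.Adj u w)) (x y : ℝ) :
    JP G x y
      = (x + y) * JP (Gdel G v) x y
        - y * (x + y) * JP (GdelSet G {w : V | w = u ∨ w = v}) x y
        + y * JP (Gdel G u) x y
        + (1 - y) * (JP (Gcon G v) x y
            - y * JP (Gcon (Gdel G u) ⟨v, huv.ne'⟩) x y
            - x * JP (Gcon (Gdel G v) ⟨u, huv.ne⟩) x y)
        - x * (1 - y) * y ^ ((Finset.univ.filter (fun w => G.Adj u w)).card - 1) *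
            JP (GdelSet G {w : V | w = u ∨ G.Adj u w}) x y := by
  have hne : u ≠ v := huv.ne
  set s₀ : Finset V := Finset.univ.filter (fun z => z ≠ u ∧ z ≠ v) with hs₀
  set sT : Finset V := Finset.univ.filter (fun z => ¬(z = u ∨ G.Adj u z)) with hsT
  have hu0 : u ∉ s₀ := by simp [hs₀]
  have hv0 : v ∉ s₀ := by simp [hs₀]
  have huvs : u ∉ insert v s₀ := by
    simp only [Finset.mem_insert, not_or]
    exact ⟨hne, hu0⟩
  -- the eight sum representations
  have e1 : JP G x y = ∑ W ∈ (insert u (insert v s₀)).powerset,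
      mono x y (insert u (insert v s₀)) G.Adj W := by
    refine JP_embed G (Function.Embedding.refl V) G.Adj (fun a b => Iff.rfl) _ ?_ x y
    ext z
    simp only [Finset.mem_image, Finset.mem_univ, true_and, Function.Embedding.refl_apply,
      Finset.mem_insert, hs₀, Finset.mem_filter]
    constructor
    · rintro ⟨a, rfl⟩
      by_cases h1 : a = u
      · exact Or.inl h1
      by_cases h2 : a = v
      · exact Or.inr (Or.inl h2)
      · exact Or.inr (Or.inr ⟨h1, h2⟩)
    · intro _
      exact ⟨z, rfl⟩
  have e2 : JP (Gdel G v) x y = ∑ W ∈ (insert u s₀).powerset,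
      mono x y (insert u s₀) G.Adj W := by
    refine JP_embed (Gdel G v) (Function.Embedding.subtype _) G.Adj (fun a b => Iff.rfl) _ ?_ x y
    ext z
    simp only [Finset.mem_image, Finset.mem_univ, true_and, Function.Embedding.coe_subtype,
      Subtype.exists, exists_prop, exists_eq_right, Finset.mem_insert, hs₀, Finset.mem_filter,
      Set.mem_setOf_eq]
    constructor
    · intro hz
      by_cases h1 : z = u
      · exact Or.inl h1
      · exact Or.inr ⟨h1, hz⟩
    · rintro (rfl | ⟨-, h⟩)
      · exact hne
      · exact h
  have e3 : JP (GdelSet G {w : V | w = u ∨ w = v}) x y = ∑ W ∈ s₀.powerset,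
      mono x y s₀ G.Adj W := by
    refine JP_embed (GdelSet G {w : V | w = u ∨ w = v}) (Function.Embedding.subtype _) G.Adj
      (fun a b => Iff.rfl) _ ?_ x y
    ext z
    simp only [Finset.mem_image, Finset.mem_univ, true_and, Function.Embedding.coe_subtype,
      Subtype.exists, exists_prop, exists_eq_right, hs₀, Finset.mem_filter,
      Set.mem_setOf_eq, not_or]
  have e4 : JP (Gdel G u) x y = ∑ W ∈ (insert v s₀).powerset,
      mono x y (insert v s₀) G.Adj W := by
    refine JP_embed (Gdel G u) (Function.Embedding.subtype _) G.Adj (fun a b => Iff.rfl) _ ?_ x y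
    ext z
    simp only [Finset.mem_image, Finset.mem_univ, true_and, Function.Embedding.coe_subtype,
      Subtype.exists, exists_prop, exists_eq_right, Finset.mem_insert, hs₀, Finset.mem_filter,
      Set.mem_setOf_eq]
    constructor
    · intro hz
      by_cases h2 : z = v
      · exact Or.inl h2
      · exact Or.inr ⟨hz, h2⟩
    · rintro (rfl | ⟨h, -⟩)
      · exact hne.symm
      · exact h
  have e5 : JP (Gcon G v) x y = ∑ W ∈ (insert u s₀).powerset,
      mono x y (insert u s₀) (fun z w => z ≠ w ∧ (G.Adj z w ∨ (G.Adj z v ∧ G.Adj v w))) W := by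
    refine JP_embed (Gcon G v) (Function.Embedding.subtype _)
      (fun z w => z ≠ w ∧ (G.Adj z w ∨ (G.Adj z v ∧ G.Adj v w)))
      (fun a b => and_congr (not_congr Subtype.ext_iff) Iff.rfl) _ ?_ x y
    ext z
    simp only [Finset.mem_image, Finset.mem_univ, true_and, Function.Embedding.coe_subtype,
      Subtype.exists, exists_prop, exists_eq_right, Finset.mem_insert, hs₀, Finset.mem_filter]
    constructor
    · intro hz
      by_cases h1 : z = u
      · exact Or.inl h1
      · exact Or.inr ⟨h1, hz⟩
    · rintro (rfl | ⟨-, h⟩)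
      · exact hne
      · exact h
  have e6 : JP (Gcon (Gdel G u) ⟨v, huv.ne'⟩) x y = ∑ W ∈ s₀.powerset,
      mono x y s₀ (fun z w => z ≠ w ∧ (G.Adj z w ∨ (G.Adj z v ∧ G.Adj v w))) W := by
    refine JP_embed (Gcon (Gdel G u) ⟨v, huv.ne'⟩)
      ⟨fun a => a.1.1, fun a b h => Subtype.ext (Subtype.ext h)⟩
      (fun z w => z ≠ w ∧ (G.Adj z w ∨ (G.Adj z v ∧ G.Adj v w)))
      (fun a b => and_congr (not_congr (Subtype.ext_iff.trans Subtype.ext_iff)) Iff.rfl) _ ?_ x y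
    ext z
    simp only [Finset.mem_image, Finset.mem_univ, true_and, Function.Embedding.coeFn_mk,
      hs₀, Finset.mem_filter]
    constructor
    · rintro ⟨a, rfl⟩
      exact ⟨a.1.2, fun h => a.2 (Subtype.ext h)⟩
    · rintro ⟨h1, h2⟩
      exact ⟨⟨⟨z, h1⟩, fun hc => h2 (congrArg Subtype.val hc)⟩, rfl⟩
  have e7 : JP (Gcon (Gdel G v) ⟨u, huv.ne⟩) x y = ∑ W ∈ s₀.powerset,
      mono x y s₀ (fun z w => z ≠ w ∧ (G.Adj z w ∨ (G.Adj z u ∧ G.Adj u w))) W := by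
    refine JP_embed (Gcon (Gdel G v) ⟨u, huv.ne⟩)
      ⟨fun a => a.1.1, fun a b h => Subtype.ext (Subtype.ext h)⟩
      (fun z w => z ≠ w ∧ (G.Adj z w ∨ (G.Adj z u ∧ G.Adj u w)))
      (fun a b => and_congr (not_congr (Subtype.ext_iff.trans Subtype.ext_iff)) Iff.rfl) _ ?_ x y
    ext z
    simp only [Finset.mem_image, Finset.mem_univ, true_and, Function.Embedding.coeFn_mk,
      hs₀, Finset.mem_filter]
    constructor
    · rintro ⟨a, rfl⟩
      exact ⟨fun h => a.2 (Subtype.ext h), a.1.2⟩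
    · rintro ⟨h1, h2⟩
      exact ⟨⟨⟨z, h2⟩, fun hc => h1 (congrArg Subtype.val hc)⟩, rfl⟩
  have e8 : JP (GdelSet G {w : V | w = u ∨ G.Adj u w}) x y = ∑ W ∈ sT.powerset,
      mono x y sT G.Adj W := by
    refine JP_embed (GdelSet G {w : V | w = u ∨ G.Adj u w}) (Function.Embedding.subtype _) G.Adj
      (fun a b => Iff.rfl) _ ?_ x y
    ext z
    simp only [Finset.mem_image, Finset.mem_univ, true_and, Function.Embedding.coe_subtype,
      Subtype.exists, exists_prop, exists_eq_right, hsT, Finset.mem_filter, Set.mem_setOf_eq]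
  have hTsub : sT ⊆ s₀ := by
    intro z hz
    simp only [hsT, Finset.mem_filter, Finset.mem_univ, true_and, not_or] at hz
    simp only [hs₀, Finset.mem_filter, Finset.mem_univ, true_and]
    exact ⟨hz.1, fun e => hz.2 (e ▸ huv)⟩
  have hlast : (∑ W ∈ sT.powerset, mono x y sT G.Adj W)
      = ∑ W ∈ s₀.powerset, (if ∀ w ∈ W, ¬ G.Adj u w then mono x y sT G.Adj W else 0) := by
    have step1 : ∀ W ∈ sT.powerset,
        mono x y sT G.Adj W = (if ∀ w ∈ W, ¬ G.Adj u w then mono x y sT G.Adj W else 0) := by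
      intro W hW
      rw [if_pos]
      intro w hw h
      have hm := Finset.mem_powerset.mp hW hw
      simp only [hsT, Finset.mem_filter, Finset.mem_univ, true_and, not_or] at hm
      exact hm.2 h
    rw [Finset.sum_congr rfl step1]
    refine Finset.sum_subset (Finset.powerset_mono.mpr hTsub) ?_
    intro W hWs hWn
    rw [if_neg]
    intro hall
    refine hWn (Finset.mem_powerset.mpr fun w hw => ?_)
    have hws := Finset.mem_powerset.mp hWs hw
    simp only [hs₀, Finset.mem_filter, Finset.mem_univ, true_and] at hws
    simp only [hsT, Finset.mem_filter, Finset.mem_univ, true_and, not_or]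
    exact ⟨hws.1, hall w hw⟩
  rw [e1, e2, e3, e4, e5, e6, e7, e8, hlast]
  simp only [Finset.sum_powerset_insert huvs, Finset.sum_powerset_insert hu0,
    Finset.sum_powerset_insert hv0]
  have main : (∑ W ∈ s₀.powerset,
        (mono x y (insert u (insert v s₀)) G.Adj W
          + mono x y (insert u (insert v s₀)) G.Adj (insert v W)
          + mono x y (insert u (insert v s₀)) G.Adj (insert u W)
          + mono x y (insert u (insert v s₀)) G.Adj (insert u (insert v W))))
      = ∑ W ∈ s₀.powerset,
        ((x + y) * (mono x y (insert u s₀) G.Adj W + mono x y (insert u s₀) G.Adj (insert u W))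
          - y * (x + y) * mono x y s₀ G.Adj W
          + y * (mono x y (insert v s₀) G.Adj W + mono x y (insert v s₀) G.Adj (insert v W))
          + (1 - y) * ((mono x y (insert u s₀)
                  (fun z w => z ≠ w ∧ (G.Adj z w ∨ (G.Adj z v ∧ G.Adj v w))) W
                + mono x y (insert u s₀)
                  (fun z w => z ≠ w ∧ (G.Adj z w ∨ (G.Adj z v ∧ G.Adj v w))) (insert u W))
              - y * mono x y s₀ (fun z w => z ≠ w ∧ (G.Adj z w ∨ (G.Adj z v ∧ G.Adj v w))) W
              - x * mono x y s₀ (fun z w => z ≠ w ∧ (G.Adj z w ∨ (G.Adj z u ∧ G.Adj u w))) W)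
          - x * (1 - y) * y ^ ((Finset.univ.filter (fun w => G.Adj u w)).card - 1) *
              (if ∀ w ∈ W, ¬ G.Adj u w then mono x y sT G.Adj W else 0)) :=
    Finset.sum_congr rfl (fun W hW =>
      key G u v huv hcov x y s₀ sT hs₀ hsT W (Finset.mem_powerset.mp hW))
  simp only [Finset.sum_add_distrib, Finset.sum_sub_distrib, ← Finset.mul_sum] at main
  linear_combination main
end

section
/- If G contains a vertex v of valency 1 with unique neighbour u, then J(G) = (1+x) J(G − v) + x(y−1)( J((G−v)∖u) + y^{|N(u)|−1} J(G − N[u]) ). -/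
open Finset
open scoped Classical

set_option maxHeartbeats 1000000

lemma JP_transfer {α β : Type} [Fintype α] [Fintype β] (f : β ↪ α)
    (G' : SimpleGraph β) (R : α → α → Prop)
    (hR : ∀ a b, G'.Adj a b ↔ R (f a) (f b)) (x y : ℝ) :
    JP G' x y = ∑ W ∈ ((univ : Finset β).map f).powerset,
      x ^ W.card * y ^ ((univ : Finset α).filter
        (fun w => (∃ b, f b = w) ∧ w ∉ W ∧ ∃ c ∈ W, R w c)).card := by
  rw [JP]
  refine Finset.sum_nbij' (fun A => A.map f) (fun W => W.preimage f (f.injective.injOn)) ?_ ?_ ?_ ?_ ?_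
  · intro A _
    simp [Finset.mem_powerset, Finset.map_subset_map]
  · intro W _; exact Finset.mem_univ _
  · intro A _; exact Finset.preimage_map f A
  · intro W hW
    rw [Finset.mem_powerset] at hW
    ext w
    simp only [Finset.mem_map, Finset.mem_preimage]
    constructor
    · rintro ⟨b, hb, rfl⟩; exact hb
    · intro hw
      obtain ⟨b, -, rfl⟩ := Finset.mem_map.mp (hW hw)
      exact ⟨b, hw, rfl⟩
  · intro A _
    rw [Finset.card_map]
    congr 2
    have h2 : ((univ : Finset α).filter
        (fun w => (∃ b, f b = w) ∧ w ∉ A.map f ∧ ∃ c ∈ A.map f, R w c)) = (extN G' A).map f := by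
      ext w
      simp only [Finset.mem_filter, Finset.mem_univ, true_and, Finset.mem_map, extN]
      constructor
      · rintro ⟨⟨b, rfl⟩, hnb, c, hc, hRc⟩
        obtain ⟨a, ha, rfl⟩ := hc
        exact ⟨b, ⟨fun hb => hnb ⟨b, hb, rfl⟩, a, ha, (hR b a).2 hRc⟩, rfl⟩
      · rintro ⟨b, ⟨hb1, a, ha, hab⟩, rfl⟩
        refine ⟨⟨b, rfl⟩, ?_, f a, ⟨a, ha, rfl⟩, (hR b a).1 hab⟩
        rintro ⟨b', hb', hb'e⟩
        exact hb1 (f.injective hb'e ▸ hb')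
    rw [h2, Finset.card_map]

section
variable {V : Type} [Fintype V]

lemma transfer_clean {α β : Type} [Fintype α] [Fintype β] (f : β ↪ α)
    (G' : SimpleGraph β) (R : α → α → Prop) (P : α → Prop)
    (hR : ∀ a b, G'.Adj a b ↔ R (f a) (f b))
    (hP : ∀ w, (∃ b, f b = w) ↔ P w) (x y : ℝ) :
    JP G' x y = ∑ W ∈ ((univ : Finset α).filter P).powerset,
      x ^ W.card * y ^ ((univ : Finset α).filter
        (fun w => P w ∧ w ∉ W ∧ ∃ c ∈ W, R w c)).card := by
  rw [JP_transfer f G' R hR x y]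
  have h1 : ((univ : Finset β).map f) = (univ : Finset α).filter P := by
    ext w
    simp only [mem_map, mem_univ, true_and, mem_filter]
    exact hP w
  rw [h1]
  refine sum_congr rfl fun W _ => ?_
  congr 2
  refine congrArg Finset.card (filter_congr fun w _ => ?_)
  exact and_congr_left fun _ => hP w

lemma JP_del (G : SimpleGraph V) (v : V) (x y : ℝ) :
    JP (Gdel G v) x y = ∑ W ∈ (univ.filter (fun w => w ≠ v)).powerset,
      x ^ W.card * y ^ ((univ.filter (fun w : V => w ≠ v ∧ w ∉ W ∧ ∃ c ∈ W, G.Adj w c)).card) := by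
  rw [transfer_clean (Function.Embedding.subtype _) (Gdel G v) (fun a b => G.Adj a b)
    (fun w => w ≠ v) (fun a b => Iff.rfl)
    (fun w => ⟨fun ⟨b, hb⟩ => hb ▸ b.prop, fun h => ⟨⟨w, h⟩, rfl⟩⟩) x y]
  congr!

lemma JP_delSet (G : SimpleGraph V) (u : V) (x y : ℝ) :
    JP (GdelSet G {w : V | w = u ∨ G.Adj u w}) x y
      = ∑ W ∈ (univ.filter (fun w : V => ¬(w = u ∨ G.Adj u w))).powerset,
      x ^ W.card * y ^ ((univ.filter
        (fun w : V => ¬(w = u ∨ G.Adj u w) ∧ w ∉ W ∧ ∃ c ∈ W, G.Adj w c)).card) := by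
  rw [transfer_clean (Function.Embedding.subtype _) (GdelSet G {w : V | w = u ∨ G.Adj u w})
    (fun a b => G.Adj a b) (fun w : V => ¬(w = u ∨ G.Adj u w)) (fun a b => Iff.rfl)
    (fun w => ⟨fun ⟨b, hb⟩ => hb ▸ b.prop, fun h => ⟨⟨w, h⟩, rfl⟩⟩) x y]
  congr!

lemma JP_con (G : SimpleGraph V) (v : V) (u : {w : V // w ≠ v}) (x y : ℝ) :
    JP (Gcon (Gdel G v) u) x y
      = ∑ W ∈ (univ.filter (fun w : V => w ≠ v ∧ w ≠ ↑u)).powerset,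
      x ^ W.card * y ^ ((univ.filter
        (fun w : V => (w ≠ v ∧ w ≠ ↑u) ∧ w ∉ W ∧ ∃ c ∈ W,
          w ≠ c ∧ (G.Adj w c ∨ (G.Adj w ↑u ∧ G.Adj ↑u c)))).card) := by
  have hR : ∀ a b : {a : {w : V // w ≠ v} // a ≠ u}, (Gcon (Gdel G v) u).Adj a b ↔
      ((a.val.val ≠ b.val.val) ∧ (G.Adj a.val.val b.val.val ∨
        (G.Adj a.val.val ↑u ∧ G.Adj ↑u b.val.val))) := by
    intro a b
    constructor
    · rintro ⟨h1, h2⟩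
      exact ⟨fun he => h1 (Subtype.ext (Subtype.ext he)), h2⟩
    · rintro ⟨h1, h2⟩
      exact ⟨fun he => h1 (congrArg (fun z : {a : {w : V // w ≠ v} // a ≠ u} => z.val.val) he), h2⟩
  have hP : ∀ w : V, (∃ b : {a : {w : V // w ≠ v} // a ≠ u},
      ((Function.Embedding.subtype _).trans (Function.Embedding.subtype _)) b = w)
      ↔ (w ≠ v ∧ w ≠ ↑u) := by
    intro w
    constructor
    · rintro ⟨b, rfl⟩
      exact ⟨b.val.prop, fun he => b.prop (Subtype.ext he)⟩
    · rintro ⟨h1, h2⟩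
      exact ⟨⟨⟨w, h1⟩, fun he => h2 (congrArg Subtype.val he)⟩, rfl⟩
  rw [transfer_clean ((Function.Embedding.subtype _).trans (Function.Embedding.subtype _))
    (Gcon (Gdel G v) u)
    (fun a b => a ≠ b ∧ (G.Adj a b ∨ (G.Adj a ↑u ∧ G.Adj ↑u b)))
    (fun w : V => w ≠ v ∧ w ≠ ↑u) hR hP x y]
  congr!

end

section
variable {V : Type} [Fintype V] {G : SimpleGraph V} {u v : V} {A : Finset V}

lemma hvw_of_hdeg (hdeg : univ.filter (fun w => G.Adj v w) = {u}) : ∀ w, G.Adj v w ↔ w = u := by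
  intro w
  have h := Finset.ext_iff.mp hdeg w
  simpa using h

/-- E1 -/
lemma extE1 (hw : ∀ w, G.Adj v w ↔ w = u) (hu : u ∉ A) : extN G A = univ.filter (fun w : V => w ≠ v ∧ w ∉ A ∧ ∃ c ∈ A, G.Adj w c) := by
  ext w
  simp only [extN, mem_filter, mem_univ, true_and]
  constructor
  · rintro ⟨h1, c, hc, hwc⟩
    refine ⟨?_, h1, c, hc, hwc⟩
    rintro rfl
    exact hu (((hw c).1 hwc) ▸ hc)
  · tauto

/-- E2 -/
lemma extE2 (hw : ∀ w, G.Adj v w ↔ w = u) (hv : v ∉ A) (huv : u ≠ v) :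
    extN G (insert u A) =
      insert v (univ.filter (fun w : V => w ≠ v ∧ w ∉ insert u A ∧ ∃ c ∈ insert u A, G.Adj w c)) := by
  ext w
  simp only [extN, mem_filter, mem_univ, true_and, mem_insert]
  constructor
  · rintro ⟨h1, c, hc, hwc⟩
    by_cases hwv : w = v
    · exact Or.inl hwv
    · exact Or.inr ⟨hwv, h1, c, hc, hwc⟩
  · rintro (rfl | ⟨h0, h1, c, hc, hwc⟩)
    · refine ⟨?_, u, Or.inl rfl, (hw u).2 rfl⟩
      rintro (h | h)
      · exact huv h.symm
      · exact hv h
    · exact ⟨h1, c, hc, hwc⟩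

/-- E5 -/
lemma extE5 (hw : ∀ w, G.Adj v w ↔ w = u) (huv : u ≠ v) :
    extN G (insert v (insert u A)) =
      univ.filter (fun w : V => w ≠ v ∧ w ∉ insert u A ∧ ∃ c ∈ insert u A, G.Adj w c) := by
  have hwv' : ∀ w, G.Adj w v ↔ w = u := fun w => by rw [G.adj_comm]; exact hw w
  ext w
  simp only [extN, mem_filter, mem_univ, true_and, mem_insert]
  constructor
  · rintro ⟨h1, c, hc, hwc⟩
    push_neg at h1
    obtain ⟨hwv, hwu, hwA⟩ := h1
    refine ⟨hwv, by tauto, ?_⟩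
    rcases hc with rfl | hc
    · exact absurd ((hwv' w).1 hwc) hwu
    · exact ⟨c, hc, hwc⟩
  · rintro ⟨h0, h1, c, hc, hwc⟩
    push_neg at h1
    exact ⟨by tauto, c, Or.inr hc, hwc⟩

/-- E3a -/
lemma extE3a (hw : ∀ w, G.Adj v w ↔ w = u) (hv : v ∉ A) (hq : ∃ c ∈ A, G.Adj u c) :
    extN G (insert v A) = univ.filter (fun w : V => w ≠ v ∧ w ∉ A ∧ ∃ c ∈ A, G.Adj w c) := by
  have hwv' : ∀ w, G.Adj w v ↔ w = u := fun w => by rw [G.adj_comm]; exact hw w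
  ext w
  simp only [extN, mem_filter, mem_univ, true_and, mem_insert]
  constructor
  · rintro ⟨h1, c, hc, hwc⟩
    push_neg at h1
    obtain ⟨hwv, hwA⟩ := h1
    refine ⟨hwv, hwA, ?_⟩
    rcases hc with rfl | hc
    · obtain ⟨d, hd, hud⟩ := hq
      exact ⟨d, hd, ((hwv' w).1 hwc) ▸ hud⟩
    · exact ⟨c, hc, hwc⟩
  · rintro ⟨h0, h1, c, hc, hwc⟩
    exact ⟨by tauto, c, Or.inr hc, hwc⟩

/-- E4a -/
lemma extE4a (hw : ∀ w, G.Adj v w ↔ w = u) (hu : u ∉ A) (hv : v ∉ A) (huv : u ≠ v) (hnq : ¬∃ c ∈ A, G.Adj u c) :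
    extN G (insert v A) =
      insert u (univ.filter (fun w : V => w ≠ v ∧ w ∉ A ∧ ∃ c ∈ A, G.Adj w c)) := by
  have hwv' : ∀ w, G.Adj w v ↔ w = u := fun w => by rw [G.adj_comm]; exact hw w
  ext w
  simp only [extN, mem_filter, mem_univ, true_and, mem_insert]
  constructor
  · rintro ⟨h1, c, hc, hwc⟩
    push_neg at h1
    obtain ⟨hwv, hwA⟩ := h1
    rcases hc with rfl | hc
    · exact Or.inl ((hwv' w).1 hwc)
    · exact Or.inr ⟨hwv, hwA, c, hc, hwc⟩
  · rintro (huw | ⟨h0, h1, c, hc, hwc⟩)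
    · subst huw
      exact ⟨by tauto, v, Or.inl rfl, (hwv' w).2 rfl⟩
    · exact ⟨by tauto, c, Or.inr hc, hwc⟩

/-- E3b -/
lemma extE3b (hq : ∃ c ∈ A, G.Adj u c) :
    univ.filter (fun w : V => w ≠ v ∧ w ∉ insert u A ∧ ∃ c ∈ insert u A, G.Adj w c) =
      univ.filter (fun w : V => (w ≠ v ∧ w ≠ u) ∧ w ∉ A ∧ ∃ c ∈ A,
        w ≠ c ∧ (G.Adj w c ∨ (G.Adj w u ∧ G.Adj u c))) := by
  ext w
  simp only [mem_filter, mem_univ, true_and, mem_insert]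
  constructor
  · rintro ⟨hwv, h1, c, hc, hwc⟩
    push_neg at h1
    obtain ⟨hwu, hwA⟩ := h1
    refine ⟨⟨hwv, hwu⟩, hwA, ?_⟩
    rcases hc with rfl | hc
    · obtain ⟨d, hd, hud⟩ := hq
      exact ⟨d, hd, fun he => hwA (he ▸ hd), Or.inr ⟨hwc, hud⟩⟩
    · exact ⟨c, hc, fun he => hwA (he ▸ hc), Or.inl hwc⟩
  · rintro ⟨⟨hwv, hwu⟩, hwA, c, hc, _, (hwc | ⟨hwu', huc⟩)⟩
    · exact ⟨hwv, by tauto, c, Or.inr hc, hwc⟩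
    · exact ⟨hwv, by tauto, u, Or.inl rfl, hwu'⟩

/-- E4b -/
lemma extE4b (hnq : ¬∃ c ∈ A, G.Adj u c) :
    univ.filter (fun w : V => (w ≠ v ∧ w ≠ u) ∧ w ∉ A ∧ ∃ c ∈ A,
        w ≠ c ∧ (G.Adj w c ∨ (G.Adj w u ∧ G.Adj u c))) =
      univ.filter (fun w : V => w ≠ v ∧ w ∉ A ∧ ∃ c ∈ A, G.Adj w c) := by
  ext w
  simp only [mem_filter, mem_univ, true_and]
  constructor
  · rintro ⟨⟨hwv, hwu⟩, hwA, c, hc, _, (hwc | ⟨_, huc⟩)⟩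
    · exact ⟨hwv, hwA, c, hc, hwc⟩
    · exact absurd ⟨c, hc, huc⟩ hnq
  · rintro ⟨hwv, hwA, c, hc, hwc⟩
    have hwu : w ≠ u := by rintro rfl; exact hnq ⟨c, hc, hwc⟩
    exact ⟨⟨hwv, hwu⟩, hwA, c, hc, fun he => hwA (he ▸ hc), Or.inl hwc⟩

/-- E4c -/
lemma extE4c (hw : ∀ w, G.Adj v w ↔ w = u) (hu : u ∉ A) (hnq : ¬∃ c ∈ A, G.Adj u c) :
    univ.filter (fun w : V => w ≠ v ∧ w ∉ insert u A ∧ ∃ c ∈ insert u A, G.Adj w c) =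
      (univ.filter (fun w : V => w ≠ v ∧ G.Adj u w)) ∪
        univ.filter (fun w : V => ¬(w = u ∨ G.Adj u w) ∧ w ∉ A ∧ ∃ c ∈ A, G.Adj w c) := by
  ext w
  simp only [mem_filter, mem_univ, true_and, mem_insert, mem_union]
  constructor
  · rintro ⟨hwv, h1, c, hc, hwc⟩
    push_neg at h1
    obtain ⟨hwu, hwA⟩ := h1
    by_cases huw : G.Adj u w
    · exact Or.inl ⟨hwv, huw⟩
    · refine Or.inr ⟨by tauto, hwA, ?_⟩
      rcases hc with rfl | hc
      · exact absurd (G.adj_symm hwc) huw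
      · exact ⟨c, hc, hwc⟩
  · rintro (⟨hwv, huw⟩ | ⟨h0, hwA, c, hc, hwc⟩)
    · have hwA : w ∉ A := fun h => hnq ⟨w, h, huw⟩
      have hwu : w ≠ u := fun he => G.loopless.irrefl u (he ▸ huw)
      exact ⟨hwv, by tauto, u, Or.inl rfl, G.adj_symm huw⟩
    · push_neg at h0
      obtain ⟨hwu, huw⟩ := h0
      have hwv : w ≠ v := by
        rintro rfl
        exact hu (((hw c).1 hwc) ▸ hc)
      exact ⟨hwv, by tauto, c, Or.inr hc, hwc⟩

lemma extE4c_disj (hnq : ¬∃ c ∈ A, G.Adj u c) :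
    Disjoint (univ.filter (fun w : V => w ≠ v ∧ G.Adj u w))
      (univ.filter (fun w : V => ¬(w = u ∨ G.Adj u w) ∧ w ∉ A ∧ ∃ c ∈ A, G.Adj w c)) := by
  rw [Finset.disjoint_left]
  intro w h1 h2
  simp only [mem_filter, mem_univ, true_and] at h1 h2
  exact h2.1 (Or.inr h1.2)

end

set_option maxHeartbeats 2000000 in
theorem J_pendant_vertex {V : Type} [Fintype V] (G : SimpleGraph V) (u v : V)
    (hadj : G.Adj v u) (hdeg : Finset.univ.filter (fun w => G.Adj v w) = {u}) (x y : ℝ) :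
    JP G x y
      = (1 + x) * JP (Gdel G v) x y
        + x * (y - 1) * (JP (Gcon (Gdel G v) ⟨u, hadj.ne'⟩) x y
            + y ^ ((Finset.univ.filter (fun w => G.Adj u w)).card - 1) *
                JP (GdelSet G {w : V | w = u ∨ G.Adj u w}) x y) := by
  classical
  have huv : u ≠ v := hadj.ne'
  have hw : ∀ w, G.Adj v w ↔ w = u := hvw_of_hdeg hdeg
  have hs : (univ : Finset V) = insert v (univ.filter (fun w : V => w ≠ v)) := by
    ext w; by_cases h : w = v <;> simp [h]
  have hsc : univ.filter (fun w : V => w ≠ v)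
      = insert u (univ.filter (fun w : V => w ≠ v ∧ w ≠ u)) := by
    ext w; by_cases h : w = u <;> simp [h, huv]
  have hvns : v ∉ univ.filter (fun w : V => w ≠ v) := by simp
  have hunc : u ∉ univ.filter (fun w : V => w ≠ v ∧ w ≠ u) := by simp
  have hDc : univ.filter (fun w : V => ¬(w = u ∨ G.Adj u w))
      ⊆ univ.filter (fun w : V => w ≠ v ∧ w ≠ u) := by
    intro w hwm
    simp only [mem_filter, mem_univ, true_and] at hwm ⊢
    push_neg at hwm
    refine ⟨?_, hwm.1⟩
    rintro rfl
    exact hwm.2 (G.adj_symm hadj)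
  have hDpow : (univ.filter (fun w : V => ¬(w = u ∨ G.Adj u w))).powerset
      = (univ.filter (fun w : V => w ≠ v ∧ w ≠ u)).powerset.filter
          (fun A => A ⊆ univ.filter (fun w : V => ¬(w = u ∨ G.Adj u w))) := by
    ext B
    simp only [mem_powerset, mem_filter]
    exact ⟨fun h => ⟨h.trans hDc, h⟩, fun h => h.2⟩
  have hdH : (univ.filter (fun w => G.Adj u w)).card - 1
      = (univ.filter (fun w : V => w ≠ v ∧ G.Adj u w)).card := by
    have h1 : univ.filter (fun w => G.Adj u w)
        = insert v (univ.filter (fun w : V => w ≠ v ∧ G.Adj u w)) := by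
      ext w; by_cases h : w = v <;> simp [h, G.adj_symm hadj]
    rw [h1, card_insert_of_notMem (by simp)]
    simp
  rw [JP_del G v x y, JP_con G v ⟨u, hadj.ne'⟩ x y, JP_delSet G u x y, hdH, hDpow,
    Finset.sum_filter]
  conv_lhs => rw [JP, ← Finset.powerset_univ, hs, Finset.sum_powerset_insert hvns, hsc,
    Finset.sum_powerset_insert hunc, Finset.sum_powerset_insert hunc]
  conv_rhs => rw [hsc, Finset.sum_powerset_insert hunc]
  simp only [Finset.mul_sum, ← Finset.sum_add_distrib]
  refine Finset.sum_congr rfl fun A hA => ?_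
  have hAc := mem_powerset.mp hA
  have hvA : v ∉ A := fun h => ((mem_filter.mp (hAc h)).2).1 rfl
  have huA : u ∉ A := fun h => ((mem_filter.mp (hAc h)).2).2 rfl
  have hvins : v ∉ insert u A := by simp [Ne.symm huv, hvA]
  have hvF : v ∉ univ.filter
      (fun w : V => w ≠ v ∧ w ∉ insert u A ∧ ∃ c ∈ insert u A, G.Adj w c) := by simp
  rw [extE1 hw huA, extE2 hw hvA huv, extE5 hw huv,
    card_insert_of_notMem hvF, card_insert_of_notMem hvins,
    card_insert_of_notMem hvA, card_insert_of_notMem huA]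
  by_cases hq : ∃ c ∈ A, G.Adj u c
  · have hnAD : ¬ A ⊆ univ.filter (fun w : V => ¬(w = u ∨ G.Adj u w)) := by
      obtain ⟨c, hc, hqc⟩ := hq
      intro hAD
      have := hAD hc
      simp only [mem_filter, mem_univ, true_and] at this
      exact this (Or.inr hqc)
    rw [extE3a hw hvA hq, ← extE3b (v := v) hq, if_neg hnAD]
    ring
  · have hAD : A ⊆ univ.filter (fun w : V => ¬(w = u ∨ G.Adj u w)) := by
      intro a ha
      simp only [mem_filter, mem_univ, true_and]
      push_neg
      exact ⟨fun h => huA (h ▸ ha), fun h => hq ⟨a, ha, h⟩⟩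
    have huF : u ∉ univ.filter
        (fun w : V => w ≠ v ∧ w ∉ A ∧ ∃ c ∈ A, G.Adj w c) := by
      intro hm
      exact hq (mem_filter.mp hm).2.2.2
    have hsplit : (univ.filter
        (fun w : V => w ≠ v ∧ w ∉ insert u A ∧ ∃ c ∈ insert u A, G.Adj w c)).card
        = (univ.filter (fun w : V => w ≠ v ∧ G.Adj u w)).card
          + (univ.filter (fun w : V => ¬(w = u ∨ G.Adj u w) ∧ w ∉ A ∧ ∃ c ∈ A, G.Adj w c)).card := by
      rw [extE4c hw huA hq, card_union_of_disjoint (extE4c_disj hq)]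
    rw [extE4a hw huA hvA huv hq, card_insert_of_notMem huF, extE4b (v := v) hq,
      if_pos hAD, hsplit, pow_add]
    ring
end

section
/- Let v be a cut-vertex of a graph G with G split as above into pieces C₁, …, C_l each containing v. Then Σ_{W ⊆ V(G), v ∈ W} x^{|W|} y^{|N_G(W)|} · x^{l−1} = Π_{j=1}^{l} ( Σ_{W_j ⊆ V(C_j), v ∈ W_j} x^{|W_j|} y^{|N_{C_j}(W_j)|} ). -/
open Finset
open scoped Classical

/-- The piece of `G` induced by a cut vertex `v` together with the connected
component `c` of `G − v`. -/
noncomputable def Cpart {V : Type} [Fintype V] (G : SimpleGraph V) (v : V)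
    (c : (Gdel G v).ConnectedComponent) :
    SimpleGraph {w : V // w = v ∨ ∃ h : w ≠ v, (Gdel G v).connectedComponentMk ⟨w, h⟩ = c} :=
  G.induce {w : V | w = v ∨ ∃ h : w ≠ v, (Gdel G v).connectedComponentMk ⟨w, h⟩ = c}

/-- The copy of the cut vertex `v` inside the piece `Cpart G v c`. -/
noncomputable def vcopy {V : Type} [Fintype V] (G : SimpleGraph V) (v : V)
    (c : (Gdel G v).ConnectedComponent) :
    {w : V // w = v ∨ ∃ h : w ≠ v, (Gdel G v).connectedComponentMk ⟨w, h⟩ = c} :=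
  ⟨v, Or.inl rfl⟩

section AuxCut

variable {V : Type} [Fintype V] {G : SimpleGraph V} {v : V}

private lemma gdel_adj {a b : V} (ha : a ≠ v) (hb : b ≠ v) (hab : G.Adj a b) :
    (Gdel G v).Adj ⟨a, ha⟩ ⟨b, hb⟩ := by
  simp [Gdel, hab]

private lemma cpart_adj {c : (Gdel G v).ConnectedComponent}
    {a b : {w : V // w = v ∨ ∃ h : w ≠ v, (Gdel G v).connectedComponentMk ⟨w, h⟩ = c}} :
    (Cpart G v c).Adj a b ↔ G.Adj a.1 b.1 := by
  simp [Cpart]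

private lemma pc_unique {c c' : (Gdel G v).ConnectedComponent} {w : V} (hw : w ≠ v)
    (h1 : w = v ∨ ∃ h : w ≠ v, (Gdel G v).connectedComponentMk ⟨w, h⟩ = c)
    (h2 : w = v ∨ ∃ h : w ≠ v, (Gdel G v).connectedComponentMk ⟨w, h⟩ = c') : c = c' := by
  rcases h1 with rfl | ⟨h, e1⟩
  · exact absurd rfl hw
  · rcases h2 with rfl | ⟨h', e2⟩
    · exact absurd rfl hw
    · exact e1.symm.trans e2

private lemma pc_adj {c : (Gdel G v).ConnectedComponent} {a b : V} (ha : a ≠ v) (hb : b ≠ v)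
    (hab : G.Adj a b)
    (hac : a = v ∨ ∃ h : a ≠ v, (Gdel G v).connectedComponentMk ⟨a, h⟩ = c) :
    b = v ∨ ∃ h : b ≠ v, (Gdel G v).connectedComponentMk ⟨b, h⟩ = c := by
  rcases hac with rfl | ⟨h, e⟩
  · exact absurd rfl ha
  · refine Or.inr ⟨hb, ?_⟩
    have h2 : (Gdel G v).connectedComponentMk ⟨b, hb⟩ = (Gdel G v).connectedComponentMk ⟨a, ha⟩ :=
      SimpleGraph.ConnectedComponent.sound (gdel_adj hb ha hab.symm).reachable
    exact h2.trans e

end AuxCut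

theorem J_cut_vertex_mem {V : Type} [Fintype V] (G : SimpleGraph V) (v : V)
    (hconn : G.Connected)
    (hcut : 2 ≤ Fintype.card ((Gdel G v).ConnectedComponent)) (x y : ℝ) :
    (∑ W ∈ Finset.univ.filter (fun W : Finset V => v ∈ W),
        x ^ W.card * y ^ (extN G W).card)
      * x ^ (Fintype.card ((Gdel G v).ConnectedComponent) - 1)
      = ∏ c : (Gdel G v).ConnectedComponent,
          ∑ W ∈ Finset.univ.filter (fun W => vcopy G v c ∈ W),
            x ^ W.card * y ^ (extN (Cpart G v c) W).card := by
  classical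
  set l := Fintype.card ((Gdel G v).ConnectedComponent) with hl
  have hl1 : 1 ≤ l := by omega
  obtain ⟨c₀⟩ : Nonempty ((Gdel G v).ConnectedComponent) := Fintype.card_pos_iff.mp (by omega)
  rw [Finset.prod_univ_sum, Finset.sum_mul]
  refine Finset.sum_nbij'
    (fun W => fun c => Finset.univ.filter
      (fun u : {w : V // w = v ∨ ∃ h : w ≠ v, (Gdel G v).connectedComponentMk ⟨w, h⟩ = c} =>
        u.1 ∈ W))
    (fun g => Finset.univ.filter (fun w => ∃ c, ∃ u ∈ g c, u.1 = w))
    ?_ ?_ ?_ ?_ ?_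
  · intro W hW
    simp only [Finset.mem_filter, Finset.mem_univ, true_and] at hW
    simp only [Fintype.mem_piFinset, Finset.mem_filter, Finset.mem_univ, true_and]
    intro c
    exact hW
  · intro g hg
    simp only [Fintype.mem_piFinset, Finset.mem_filter, Finset.mem_univ, true_and] at hg
    simp only [Finset.mem_filter, Finset.mem_univ, true_and]
    exact ⟨c₀, vcopy G v c₀, hg c₀, rfl⟩
  · intro W hW
    simp only [Finset.mem_filter, Finset.mem_univ, true_and] at hW
    ext w
    simp only [Finset.mem_filter, Finset.mem_univ, true_and]
    constructor
    · rintro ⟨c, u, hu, rfl⟩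
      exact hu
    · intro hw
      by_cases hwv : w = v
      · subst hwv
        exact ⟨c₀, ⟨w, Or.inl rfl⟩, by simpa using hw, rfl⟩
      · exact ⟨(Gdel G v).connectedComponentMk ⟨w, hwv⟩,
          ⟨w, Or.inr ⟨hwv, rfl⟩⟩, by simpa using hw, rfl⟩
  · intro g hg
    simp only [Fintype.mem_piFinset, Finset.mem_filter, Finset.mem_univ, true_and] at hg
    funext c
    ext u
    simp only [Finset.mem_filter, Finset.mem_univ, true_and]
    constructor
    · rintro ⟨c', u', hu', he⟩
      by_cases huv : u.1 = v
      · have hu : u = vcopy G v c := Subtype.ext huv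
        rw [hu]; exact hg c
      · have h2 : u.1 = v ∨ ∃ h : u.1 ≠ v, (Gdel G v).connectedComponentMk ⟨u.1, h⟩ = c' :=
          he ▸ u'.2
        have hcc : c' = c := pc_unique huv h2 u.2
        subst hcc
        have : u' = u := Subtype.ext he
        rwa [← this]
    · intro hu
      exact ⟨c, u, hu, rfl⟩
  · intro W hW
    simp only [Finset.mem_filter, Finset.mem_univ, true_and] at hW
    have hWc : 1 ≤ W.card := Finset.card_pos.mpr ⟨v, hW⟩
    -- membership characterization of the piece external neighbourhood
    have hmemE : ∀ (c : (Gdel G v).ConnectedComponent)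
        (u : {w : V // w = v ∨ ∃ h : w ≠ v, (Gdel G v).connectedComponentMk ⟨w, h⟩ = c}),
        u ∈ extN (Cpart G v c) (Finset.univ.filter (fun u' => u'.1 ∈ W)) ↔ u.1 ∈ extN G W := by
      intro c u
      simp only [extN, Finset.mem_filter, Finset.mem_univ, true_and]
      constructor
      · rintro ⟨hnot, w', hw', hadj⟩
        exact ⟨hnot, w'.1, hw', cpart_adj.mp hadj⟩
      · rintro ⟨hnot, b, hb, hadj⟩
        refine ⟨hnot, ?_⟩
        by_cases hbv : b = v
        · exact ⟨vcopy G v c, hW, cpart_adj.mpr (hbv ▸ hadj)⟩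
        · have huv : u.1 ≠ v := fun h => hnot (by rw [h]; exact hW)
          have hbc : b = v ∨ ∃ h : b ≠ v, (Gdel G v).connectedComponentMk ⟨b, h⟩ = c :=
            pc_adj huv hbv hadj u.2
          exact ⟨⟨b, hbc⟩, hb, cpart_adj.mpr hadj⟩
    -- fiber cardinality
    have fib : ∀ w : V, (Finset.univ.filter (fun c : (Gdel G v).ConnectedComponent =>
        w = v ∨ ∃ h : w ≠ v, (Gdel G v).connectedComponentMk ⟨w, h⟩ = c)).card
        = if w = v then l else 1 := by
      intro w
      by_cases hw : w = v
      · subst hw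
        simp [hl]
      · rw [if_neg hw]
        have : (Finset.univ.filter (fun c : (Gdel G v).ConnectedComponent =>
            w = v ∨ ∃ h : w ≠ v, (Gdel G v).connectedComponentMk ⟨w, h⟩ = c))
            = {(Gdel G v).connectedComponentMk ⟨w, hw⟩} := by
          ext c
          simp only [Finset.mem_filter, Finset.mem_univ, true_and, Finset.mem_singleton]
          constructor
          · rintro (rfl | ⟨h, e⟩)
            · exact absurd rfl hw
            · exact e.symm
          · rintro rfl
            exact Or.inr ⟨hw, rfl⟩
        rw [this, Finset.card_singleton]
    -- card of restricted set to a piece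
    have hswap : ∀ A : Finset V,
        ∑ c : (Gdel G v).ConnectedComponent, (A.filter (fun w =>
          w = v ∨ ∃ h : w ≠ v, (Gdel G v).connectedComponentMk ⟨w, h⟩ = c)).card
        = ∑ w ∈ A, (Finset.univ.filter (fun c : (Gdel G v).ConnectedComponent =>
          w = v ∨ ∃ h : w ≠ v, (Gdel G v).connectedComponentMk ⟨w, h⟩ = c)).card := by
      intro A
      simp only [Finset.card_filter]
      rw [Finset.sum_comm]
    have hcardW : ∀ c : (Gdel G v).ConnectedComponent, (Finset.univ.filter
        (fun u : {w : V // w = v ∨ ∃ h : w ≠ v, (Gdel G v).connectedComponentMk ⟨w, h⟩ = c} =>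
          u.1 ∈ W)).card
        = (W.filter (fun w => w = v ∨ ∃ h : w ≠ v,
            (Gdel G v).connectedComponentMk ⟨w, h⟩ = c)).card := by
      intro c
      refine Finset.card_nbij Subtype.val ?_ ?_ ?_
      · intro u hu
        simp only [Finset.mem_coe, Finset.mem_filter, Finset.mem_univ, true_and] at hu ⊢
        exact ⟨hu, u.2⟩
      · exact Subtype.val_injective.injOn
      · intro w hw
        simp only [Finset.mem_coe, Finset.mem_filter] at hw
        exact ⟨⟨w, hw.2⟩, by simpa using hw.1, rfl⟩
    have hcardE : ∀ c : (Gdel G v).ConnectedComponent,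
        (extN (Cpart G v c) (Finset.univ.filter (fun u' => u'.1 ∈ W))).card
        = ((extN G W).filter (fun w => w = v ∨ ∃ h : w ≠ v,
            (Gdel G v).connectedComponentMk ⟨w, h⟩ = c)).card := by
      intro c
      refine Finset.card_nbij Subtype.val ?_ ?_ ?_
      · intro u hu
        simp only [Finset.mem_coe] at hu
        simp only [Finset.mem_coe, Finset.mem_filter]
        exact ⟨(hmemE c u).mp hu, u.2⟩
      · exact Subtype.val_injective.injOn
      · intro w hw
        simp only [Finset.mem_coe, Finset.mem_filter] at hw
        exact ⟨⟨w, hw.2⟩, by simpa using (hmemE c ⟨w, hw.2⟩).mpr hw.1, rfl⟩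
    -- sum of piece cardinalities
    have hvE : v ∉ extN G W := by
      simp only [extN, Finset.mem_filter, Finset.mem_univ, true_and]
      rintro ⟨hv, -⟩
      exact hv hW
    have hsumW : ∑ c : (Gdel G v).ConnectedComponent, (Finset.univ.filter
        (fun u : {w : V // w = v ∨ ∃ h : w ≠ v, (Gdel G v).connectedComponentMk ⟨w, h⟩ = c} =>
          u.1 ∈ W)).card = W.card + (l - 1) := by
      simp only [hcardW]
      rw [hswap W]
      simp only [fib]
      rw [← Finset.add_sum_erase _ _ hW, if_pos rfl]
      rw [Finset.sum_congr rfl (fun w hw => if_neg (Finset.ne_of_mem_erase hw))]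
      simp only [Finset.sum_const, smul_eq_mul, mul_one, Finset.card_erase_of_mem hW]
      omega
    have hsumE : ∑ c : (Gdel G v).ConnectedComponent,
        (extN (Cpart G v c) (Finset.univ.filter (fun u' => u'.1 ∈ W))).card
        = (extN G W).card := by
      simp only [hcardE]
      rw [hswap (extN G W)]
      rw [Finset.sum_congr rfl (fun w hw => by
        rw [fib w, if_neg (fun h => hvE (by rwa [h] at hw))])]
      simp
    rw [Finset.prod_mul_distrib, Finset.prod_pow_eq_pow_sum, Finset.prod_pow_eq_pow_sum,
      hsumW, hsumE, pow_add]
    ring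
end
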